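/- Let A be a unital associative ℂ-algebra and let δ: 0 = p₀ < p₁ < ⋯ < pₙ = 1 be a finite totally ordered family of idempotents in A. An element g ∈ A^× satisfies the condition that p_j g p_j is invertible in the corner algebra p_j A p_j for j = 1, …, n if and only if g admits a (then uniquely determined) Gauß decomposition g = x d y, where d ∈ A^× with d and d⁻¹ in D(δ), x ∈ N(1 − δ), and y ∈ N(δ); here 1 − δ denotes the flag 0 = 1 − pₙ < 1 − p_{n−1} < ⋯ < 1 − p₀ = 1. -/

import Mathlib

set_option maxHeartbeats 1600000

namespace GaussDecomp

variable {R : Type*} [Ring R]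

lemma rmul {a b c : R} (h : a * b = c) : ∀ z : R, a * (b * z) = c * z := by
  intro z; rw [← mul_assoc, h]

lemma rmul2 {a b c d : R} (h : a * (b * c) = d) : ∀ z : R, a * (b * (c * z)) = d * z := by
  intro z; rw [show a * (b * (c * z)) = (a * (b * c)) * z by noncomm_ring, h]


section basics
variable {n : ℕ} {p : ℕ → R}

lemma pabs_r (hid : ∀ k ≤ n, p k * p k = p k) (hro : ∀ k < n, p k * p (k+1) = p k) :
    ∀ j k, j ≤ k → k ≤ n → p j * p k = p j := by
  intro j k hjk hkn
  induction k, hjk using Nat.le_induction with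
  | base => exact hid j (le_trans le_rfl hkn)
  | succ k hjk ih =>
    have hk : k < n := lt_of_lt_of_le (Nat.lt_succ_self k) hkn
    have h1 := ih hk.le
    calc p j * p (k+1) = (p j * p k) * p (k+1) := by rw [h1]
    _ = p j * (p k * p (k+1)) := by rw [mul_assoc]
    _ = p j * p k := by rw [hro k hk]
    _ = p j := h1

lemma pabs_l (hid : ∀ k ≤ n, p k * p k = p k) (hlo : ∀ k < n, p (k+1) * p k = p k) :
    ∀ j k, j ≤ k → k ≤ n → p k * p j = p j := by
  intro j k hjk hkn
  induction k, hjk using Nat.le_induction with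
  | base => exact hid j (le_trans le_rfl hkn)
  | succ k hjk ih =>
    have hk : k < n := lt_of_lt_of_le (Nat.lt_succ_self k) hkn
    have h1 := ih hk.le
    calc p (k+1) * p j = p (k+1) * (p k * p j) := by rw [h1]
    _ = (p (k+1) * p k) * p j := by rw [mul_assoc]
    _ = p k * p j := by rw [hlo k hk]
    _ = p j := h1

lemma e_idem (hid : ∀ k ≤ n, p k * p k = p k) (hlo : ∀ k < n, p (k+1) * p k = p k)
    (hro : ∀ k < n, p k * p (k+1) = p k) {k : ℕ} (hk : k < n) :
    (p (k+1) - p k) * (p (k+1) - p k) = p (k+1) - p k := by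
  have h1 := hid (k+1) hk
  have h2 := hid k hk.le
  have h3 := hlo k hk
  have h4 := hro k hk
  rw [mul_sub, sub_mul, sub_mul, h1, h2, h3, h4]
  abel

lemma pe_zero (hid : ∀ k ≤ n, p k * p k = p k) (hro : ∀ k < n, p k * p (k+1) = p k)
    {k : ℕ} (hk : k < n) : p k * (p (k+1) - p k) = 0 := by
  rw [mul_sub, hro k hk, hid k hk.le, sub_self]

lemma ep_zero (hid : ∀ k ≤ n, p k * p k = p k) (hlo : ∀ k < n, p (k+1) * p k = p k)
    {k : ℕ} (hk : k < n) : (p (k+1) - p k) * p k = 0 := by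
  rw [sub_mul, hlo k hk, hid k hk.le, sub_self]

lemma e_sum (h0 : p 0 = 0) (h1 : p n = 1) :
    (∑ k ∈ Finset.range n, (p (k+1) - p k)) = 1 := by
  rw [Finset.sum_range_sub, h0, h1, sub_zero]

end basics


def Lo (n : ℕ) (p : ℕ → R) (x : R) : Prop := ∀ k ≤ n, p k * x = p k * x * p k
def Up (n : ℕ) (p : ℕ → R) (x : R) : Prop := ∀ k ≤ n, x * p k = p k * x * p k
def Ed (n : ℕ) (p : ℕ → R) (x : R) : Prop :=
  ∀ k < n, (p (k+1) - p k) * x * (p (k+1) - p k) = p (k+1) - p k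
def SL (n : ℕ) (p : ℕ → R) (x : R) : Prop := ∀ k < n, p (k+1) * x = p (k+1) * x * p k

section tri
variable {n : ℕ} {p : ℕ → R}

lemma lo_one (hid : ∀ k ≤ n, p k * p k = p k) : Lo n p (1 : R) := by
  intro k hk; simp only [mul_one]; exact (hid k hk).symm

lemma up_one (hid : ∀ k ≤ n, p k * p k = p k) : Up n p (1 : R) := by
  intro k hk; simp only [one_mul, mul_one]; exact (hid k hk).symm

lemma lo_mul {x y : R} (hx : Lo n p x) (hy : Lo n p y) : Lo n p (x * y) := by
  intro k hk
  have h1 := hx k hk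
  have h2 := hy k hk
  calc p k * (x * y) = (p k * x) * y := by noncomm_ring
  _ = (p k * x * p k) * y := congrArg (· * y) h1
  _ = (p k * x) * (p k * y) := by noncomm_ring
  _ = (p k * x) * (p k * y * p k) := congrArg ((p k * x) * ·) h2
  _ = ((p k * x * p k) * y) * p k := by noncomm_ring
  _ = ((p k * x) * y) * p k := congrArg (fun z => (z * y) * p k) h1.symm
  _ = p k * (x * y) * p k := by noncomm_ring

lemma up_mul {x y : R} (hx : Up n p x) (hy : Up n p y) : Up n p (x * y) := by
  intro k hk
  have h1 := hx k hk
  have h2 := hy k hk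
  calc (x * y) * p k = x * (y * p k) := by noncomm_ring
  _ = x * (p k * y * p k) := congrArg (x * ·) h2
  _ = (x * p k) * (y * p k) := by noncomm_ring
  _ = (p k * x * p k) * (y * p k) := congrArg (· * (y * p k)) h1
  _ = (p k * x) * (p k * y * p k) := by noncomm_ring
  _ = (p k * x) * (y * p k) := congrArg ((p k * x) * ·) h2.symm
  _ = p k * (x * y) * p k := by noncomm_ring

lemma lo_add {x y : R} (hx : Lo n p x) (hy : Lo n p y) : Lo n p (x + y) := by
  intro k hk; rw [mul_add, add_mul, ← hx k hk, ← hy k hk]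

lemma up_add {x y : R} (hx : Up n p x) (hy : Up n p y) : Up n p (x + y) := by
  intro k hk; rw [add_mul, mul_add, add_mul, hx k hk, hy k hk]



lemma ed_mul_lo (hid : ∀ k ≤ n, p k * p k = p k) (hlo : ∀ k < n, p (k+1) * p k = p k)
    (hro : ∀ k < n, p k * p (k+1) = p k)
    {x y : R} (hx : Lo n p x) (hy : Lo n p y) {k : ℕ} (hk : k < n) :
    (p (k+1) - p k) * (x * y) * (p (k+1) - p k)
      = ((p (k+1) - p k) * x * (p (k+1) - p k)) * ((p (k+1) - p k) * y * (p (k+1) - p k)) := by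
  have h1 : k + 1 ≤ n := hk
  have hpe : p k * (p (k+1) - p k) = 0 := pe_zero hid hro hk
  have hee := e_idem hid hlo hro hk
  set e := p (k+1) - p k with he
  have b1 : (p k * x) * p (k+1) = p k * x := by
    calc (p k * x) * p (k+1) = (p k * x * p k) * p (k+1) := congrArg (· * p (k+1)) (hx k hk.le)
    _ = p k * x * (p k * p (k+1)) := by noncomm_ring
    _ = p k * x * p k := congrArg (p k * x * ·) (hro k hk)
    _ = p k * x := (hx k hk.le).symm
  have h2 : e * x = (e * x) * p (k+1) := by
    have : (e * x) * p (k+1) = (p (k+1) * x) * p (k+1) - (p k * x) * p (k+1) := by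
      rw [he]; noncomm_ring
    rw [this, b1, ← hx (k+1) h1, he]; noncomm_ring
  have c1 : p k * (y * e) = 0 := by
    calc p k * (y * e) = (p k * y) * e := by noncomm_ring
    _ = (p k * y * p k) * e := congrArg (· * e) (hy k hk.le)
    _ = (p k * y) * (p k * e) := by noncomm_ring
    _ = (p k * y) * 0 := congrArg ((p k * y) * ·) hpe
    _ = 0 := mul_zero _
  have h3 : p (k+1) * (y * e) = e * (y * e) := by
    have : e * (y * e) = p (k+1) * (y * e) - p k * (y * e) := by rw [he]; noncomm_ring
    rw [this, c1, sub_zero]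
  calc e * (x * y) * e = (e * x) * (y * e) := by noncomm_ring
  _ = ((e * x) * p (k+1)) * (y * e) := congrArg (· * (y * e)) h2
  _ = (e * x) * (p (k+1) * (y * e)) := by noncomm_ring
  _ = (e * x) * (e * (y * e)) := congrArg ((e * x) * ·) h3
  _ = (e * x) * ((e * e) * (y * e)) := congrArg (fun z => (e * x) * (z * (y * e))) hee.symm
  _ = (e * x * e) * (e * y * e) := by noncomm_ring

lemma ed_mul_lo' (hid : ∀ k ≤ n, p k * p k = p k) (hlo : ∀ k < n, p (k+1) * p k = p k)
    (hro : ∀ k < n, p k * p (k+1) = p k)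
    {x y : R} (hx : Lo n p x) (hy : Lo n p y)
    (hex : Ed n p x) (hey : Ed n p y) : Ed n p (x * y) := by
  intro k hk
  rw [ed_mul_lo hid hlo hro hx hy hk, hex k hk, hey k hk, e_idem hid hlo hro hk]

lemma sl_lo (hro : ∀ k < n, p k * p (k+1) = p k) (h1 : p n = 1)
    {ν : R} (hsl : SL n p ν) : Lo n p ν := by
  intro k hk
  rcases lt_or_eq_of_le hk with hlt | heq
  · have d1 := hsl k hlt
    calc p k * ν = (p k * p (k+1)) * ν := congrArg (· * ν) (hro k hlt).symm
    _ = p k * (p (k+1) * ν) := by noncomm_ring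
    _ = p k * (p (k+1) * ν * p k) := congrArg (p k * ·) d1
    _ = (p k * p (k+1)) * ν * p k := by noncomm_ring
    _ = p k * ν * p k := by rw [hro k hlt]
  · rw [heq, h1]; simp

lemma sl_mul_lo {ν μ : R} (hsl : SL n p ν) (hμ : Lo n p μ) : SL n p (ν * μ) := by
  intro k hk
  have d1 := hsl k hk
  have d2 := hμ k hk.le
  calc p (k+1) * (ν * μ) = (p (k+1) * ν) * μ := by noncomm_ring
  _ = (p (k+1) * ν * p k) * μ := congrArg (· * μ) d1
  _ = (p (k+1) * ν) * (p k * μ) := by noncomm_ring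
  _ = (p (k+1) * ν) * (p k * μ * p k) := congrArg ((p (k+1) * ν) * ·) d2
  _ = ((p (k+1) * ν * p k) * μ) * p k := by noncomm_ring
  _ = ((p (k+1) * ν) * μ) * p k := congrArg (fun z => (z * μ) * p k) d1.symm
  _ = p (k+1) * (ν * μ) * p k := by noncomm_ring

lemma sl_neg {ν : R} (hsl : SL n p ν) : SL n p (-ν) := by
  intro k hk
  simp only [mul_neg, neg_mul]
  exact congrArg Neg.neg (hsl k hk)

lemma sl_nil (h0 : p 0 = 0) (h1 : p n = 1) {ν : R} (hsl : SL n p ν) : ν ^ n = 0 := by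
  have key : ∀ k, k ≤ n → p k * ν ^ k = 0 := by
    intro k
    induction k with
    | zero => intro _; rw [h0, zero_mul]
    | succ k ih =>
      intro hk
      have hkn : k < n := hk
      have d1 := hsl k hkn
      calc p (k+1) * ν ^ (k+1) = (p (k+1) * ν) * ν ^ k := by rw [pow_succ']; noncomm_ring
      _ = (p (k+1) * ν * p k) * ν ^ k := congrArg (· * ν ^ k) d1
      _ = (p (k+1) * ν) * (p k * ν ^ k) := by noncomm_ring
      _ = (p (k+1) * ν) * 0 := congrArg ((p (k+1) * ν) * ·) (ih hkn.le)
      _ = 0 := mul_zero _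
  calc ν ^ n = 1 * ν ^ n := (one_mul _).symm
  _ = p n * ν ^ n := by rw [h1]
  _ = 0 := key n le_rfl

lemma sl_of_nlo (hid : ∀ k ≤ n, p k * p k = p k) (hlo : ∀ k < n, p (k+1) * p k = p k)
    (hro : ∀ k < n, p k * p (k+1) = p k)
    {x : R} (hx : Lo n p x) (hex : Ed n p x) : SL n p (x - 1) := by
  intro k hk
  have hpe : p k * (p (k+1) - p k) = 0 := pe_zero hid hro hk
  have step1 : p k * x * (p (k+1) - p k) = 0 := by
    calc p k * x * (p (k+1) - p k) = (p k * x * p k) * (p (k+1) - p k) :=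
          congrArg (· * (p (k+1) - p k)) (hx k hk.le)
    _ = (p k * x) * (p k * (p (k+1) - p k)) := by noncomm_ring
    _ = (p k * x) * 0 := congrArg ((p k * x) * ·) hpe
    _ = 0 := mul_zero _
  have step2 : p (k+1) * x * (p (k+1) - p k) = p (k+1) - p k := by
    calc p (k+1) * x * (p (k+1) - p k)
        = p k * x * (p (k+1) - p k) + (p (k+1) - p k) * x * (p (k+1) - p k) := by noncomm_ring
    _ = 0 + (p (k+1) - p k) := by rw [step1, hex k hk]
    _ = p (k+1) - p k := zero_add _
  have main : p (k+1) * x = p (k+1) * x * p k + (p (k+1) - p k) := by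
    calc p (k+1) * x = p (k+1) * x * p (k+1) := hx (k+1) hk
    _ = p (k+1) * x * p k + p (k+1) * x * (p (k+1) - p k) := by noncomm_ring
    _ = p (k+1) * x * p k + (p (k+1) - p k) := by rw [step2]
  calc p (k+1) * (x - 1) = p (k+1) * x - p (k+1) := by noncomm_ring
  _ = (p (k+1) * x * p k + (p (k+1) - p k)) - p (k+1) := congrArg (· - p (k+1)) main
  _ = p (k+1) * x * p k - p k := by abel
  _ = p (k+1) * x * p k - p (k+1) * p k := by rw [hlo k hk]
  _ = p (k+1) * (x - 1) * p k := by noncomm_ring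

lemma sl_ed_zero (hid : ∀ k ≤ n, p k * p k = p k) (hro : ∀ k < n, p k * p (k+1) = p k)
    {μ : R} (hμ : SL n p μ) {k : ℕ} (hk : k < n) :
    (p (k+1) - p k) * μ * (p (k+1) - p k) = 0 := by
  have hpe : p k * (p (k+1) - p k) = 0 := pe_zero hid hro hk
  have d1 := hμ k hk
  have t1 : p (k+1) * μ * (p (k+1) - p k) = 0 := by
    calc p (k+1) * μ * (p (k+1) - p k) = (p (k+1) * μ * p k) * (p (k+1) - p k) :=
          congrArg (· * (p (k+1) - p k)) d1
    _ = (p (k+1) * μ) * (p k * (p (k+1) - p k)) := by noncomm_ring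
    _ = (p (k+1) * μ) * 0 := congrArg ((p (k+1) * μ) * ·) hpe
    _ = 0 := mul_zero _
  have t2 : p k * μ * (p (k+1) - p k) = 0 := by
    calc p k * μ * (p (k+1) - p k) = (p k * p (k+1)) * μ * (p (k+1) - p k) :=
          congrArg (fun z => z * μ * (p (k+1) - p k)) (hro k hk).symm
    _ = p k * (p (k+1) * μ * (p (k+1) - p k)) := by noncomm_ring
    _ = p k * 0 := congrArg (p k * ·) t1
    _ = 0 := mul_zero _
  calc (p (k+1) - p k) * μ * (p (k+1) - p k)
      = p (k+1) * μ * (p (k+1) - p k) - p k * μ * (p (k+1) - p k) := by noncomm_ring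
  _ = 0 - 0 := by rw [t1, t2]
  _ = 0 := by simp

lemma nlo_inv (hid : ∀ k ≤ n, p k * p k = p k) (hlo : ∀ k < n, p (k+1) * p k = p k)
    (hro : ∀ k < n, p k * p (k+1) = p k) (h0 : p 0 = 0) (h1 : p n = 1) (hn : 1 ≤ n)
    {x : R} (hx : Lo n p x) (hex : Ed n p x) :
    ∃ x', x * x' = 1 ∧ x' * x = 1 ∧ Lo n p x' ∧ Ed n p x' := by
  have hsl : SL n p (x - 1) := sl_of_nlo hid hlo hro hx hex
  have hslneg : SL n p (-(x - 1)) := sl_neg hsl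
  set ν : R := x - 1 with hν
  set s : R := ∑ i ∈ Finset.range n, (-ν) ^ i with hs
  have hpow : (-ν) ^ n = 0 := by
    rw [neg_pow, sl_nil h0 h1 hsl, mul_zero]
  have hgeom1 : x * s = 1 := by
    have h := mul_geom_sum (-ν) n
    calc x * s = (ν + 1) * s := congrArg (· * s) (by rw [hν]; abel)
    _ = -((-ν - 1) * s) := by noncomm_ring
    _ = -((-ν) ^ n - 1) := congrArg Neg.neg h
    _ = -(0 - 1) := by rw [hpow]
    _ = 1 := by simp
  have hgeom2 : s * x = 1 := by
    have h := geom_sum_mul (-ν) n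
    calc s * x = s * (ν + 1) := congrArg (s * ·) (by rw [hν]; abel)
    _ = -(s * (-ν - 1)) := by noncomm_ring
    _ = -((-ν) ^ n - 1) := congrArg Neg.neg h
    _ = -(0 - 1) := by rw [hpow]
    _ = 1 := by simp
  have hLoPow : ∀ i, Lo n p ((-ν) ^ i) := by
    intro i
    induction i with
    | zero => simpa using lo_one hid
    | succ i ih =>
      rw [pow_succ]
      exact lo_mul ih (sl_lo hro h1 hslneg)
  have hSLpow : ∀ i, SL n p ((-ν) ^ (i+1)) := by
    intro i
    induction i with
    | zero => simpa using hslneg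
    | succ i ih =>
      rw [pow_succ]
      exact sl_mul_lo ih (sl_lo hro h1 hslneg)
  have hLoS : Lo n p s := by
    intro k hk
    rw [hs, Finset.mul_sum, Finset.sum_mul]
    exact Finset.sum_congr rfl (fun i _ => hLoPow i k hk)
  have hEdS : Ed n p s := by
    intro k hk
    have expand : (p (k+1) - p k) * s * (p (k+1) - p k)
        = ∑ i ∈ Finset.range n, (p (k+1) - p k) * (-ν) ^ i * (p (k+1) - p k) := by
      rw [hs, Finset.mul_sum, Finset.sum_mul]
    rw [expand]
    have term : ∀ i ∈ Finset.range n,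
        (p (k+1) - p k) * (-ν) ^ i * (p (k+1) - p k)
          = if i = 0 then p (k+1) - p k else 0 := by
      intro i _
      cases i with
      | zero =>
        simp only [pow_zero, mul_one, if_pos rfl]
        exact e_idem hid hlo hro hk
      | succ i =>
        simp only [if_neg (Nat.succ_ne_zero i)]
        exact sl_ed_zero hid hro (hSLpow i) hk
    rw [Finset.sum_congr rfl term, Finset.sum_ite_eq' (Finset.range n) 0
      (fun _ => p (k+1) - p k), if_pos (Finset.mem_range.mpr hn)]
  exact ⟨s, hgeom1, hgeom2, hLoS, hEdS⟩


open MulOpposite in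
lemma up_lo_op {x : R} : Up n p x ↔ Lo n (fun k => op (p k)) (op x) := by
  constructor
  · intro h k hk
    simp only [← op_mul]
    exact congrArg op (by rw [← mul_assoc]; exact h k hk)
  · intro h k hk
    have := h k hk
    simp only [← op_mul] at this
    have := op_injective this
    rw [← mul_assoc] at this
    exact this

open MulOpposite in
lemma ed_ed_op {x : R} : Ed n p x ↔ Ed n (fun k => op (p k)) (op x) := by
  constructor
  · intro h k hk
    simp only [← op_sub, ← op_mul]
    exact congrArg op (by rw [← mul_assoc]; exact h k hk)
  · intro h k hk
    have := h k hk
    simp only [← op_sub, ← op_mul] at this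
    have := op_injective this
    rw [← mul_assoc] at this
    exact this

open MulOpposite in
lemma op_flag_hid (hid : ∀ k ≤ n, p k * p k = p k) :
    ∀ k ≤ n, (fun j => op (p j)) k * (fun j => op (p j)) k = (fun j => op (p j)) k := by
  intro k hk
  simp only [← op_mul]
  exact congrArg op (hid k hk)

open MulOpposite in
lemma op_flag_lo (hro : ∀ k < n, p k * p (k+1) = p k) :
    ∀ k < n, (fun j => op (p j)) (k+1) * (fun j => op (p j)) k = (fun j => op (p j)) k := by
  intro k hk
  simp only [← op_mul]
  exact congrArg op (hro k hk)

open MulOpposite in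
lemma op_flag_ro (hlo : ∀ k < n, p (k+1) * p k = p k) :
    ∀ k < n, (fun j => op (p j)) k * (fun j => op (p j)) (k+1) = (fun j => op (p j)) k := by
  intro k hk
  simp only [← op_mul]
  exact congrArg op (hlo k hk)

open MulOpposite in
lemma ed_mul_up' (hid : ∀ k ≤ n, p k * p k = p k) (hlo : ∀ k < n, p (k+1) * p k = p k)
    (hro : ∀ k < n, p k * p (k+1) = p k)
    {x y : R} (hx : Up n p x) (hy : Up n p y)
    (hex : Ed n p x) (hey : Ed n p y) : Ed n p (x * y) := by
  rw [ed_ed_op]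
  have := ed_mul_lo' (op_flag_hid hid) (op_flag_lo hro) (op_flag_ro hlo)
    (up_lo_op.mp hy) (up_lo_op.mp hx) (ed_ed_op.mp hey) (ed_ed_op.mp hex)
  rw [op_mul]
  exact this

open MulOpposite in
lemma nup_inv (hid : ∀ k ≤ n, p k * p k = p k) (hlo : ∀ k < n, p (k+1) * p k = p k)
    (hro : ∀ k < n, p k * p (k+1) = p k) (h0 : p 0 = 0) (h1 : p n = 1) (hn : 1 ≤ n)
    {y : R} (hy : Up n p y) (hey : Ed n p y) :
    ∃ y', y * y' = 1 ∧ y' * y = 1 ∧ Up n p y' ∧ Ed n p y' := by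
  have h0' : (fun j => op (p j)) 0 = 0 := by simp [h0]
  have h1' : (fun j => op (p j)) n = 1 := by simp [h1]
  obtain ⟨s, hs1, hs2, hsLo, hsEd⟩ := nlo_inv (op_flag_hid hid) (op_flag_lo hro)
    (op_flag_ro hlo) h0' h1' hn (up_lo_op.mp hy) (ed_ed_op.mp hey)
  refine ⟨s.unop, ?_, ?_, ?_, ?_⟩
  · have := congrArg unop hs2
    simpa using this
  · have := congrArg unop hs1
    simpa using this
  · rw [up_lo_op]
    simpa using hsLo
  · rw [ed_ed_op]
    simpa using hsEd

end tri

section uniq2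
variable {n : ℕ} {p : ℕ → R}

lemma e_orth (hid : ∀ k ≤ n, p k * p k = p k) (hlo : ∀ k < n, p (k+1) * p k = p k)
    (hro : ∀ k < n, p k * p (k+1) = p k) {i j : ℕ} (hi : i < n) (hj : j < n)
    (hij : i ≠ j) : (p (i+1) - p i) * (p (j+1) - p j) = 0 := by
  rcases lt_or_gt_of_ne hij with h | h
  · have e1 : p (i+1) * p (j+1) = p (i+1) := pabs_r hid hro (i+1) (j+1) (by omega) (by omega)
    have e2 : p (i+1) * p j = p (i+1) := pabs_r hid hro (i+1) j (by omega) (by omega)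
    have e3 : p i * p (j+1) = p i := pabs_r hid hro i (j+1) (by omega) (by omega)
    have e4 : p i * p j = p i := pabs_r hid hro i j (by omega) (by omega)
    rw [sub_mul, mul_sub, mul_sub, e1, e2, e3, e4]
    abel
  · have e1 : p (i+1) * p (j+1) = p (j+1) := pabs_l hid hlo (j+1) (i+1) (by omega) (by omega)
    have e2 : p (i+1) * p j = p j := pabs_l hid hlo j (i+1) (by omega) (by omega)
    have e3 : p i * p (j+1) = p (j+1) := pabs_l hid hlo (j+1) i (by omega) (by omega)
    have e4 : p i * p j = p j := pabs_l hid hlo j i (by omega) (by omega)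
    rw [sub_mul, mul_sub, mul_sub, e1, e2, e3, e4]
    abel

lemma phi_to_ed (hid : ∀ k ≤ n, p k * p k = p k) (hlo : ∀ k < n, p (k+1) * p k = p k)
    (hro : ∀ k < n, p k * p (k+1) = p k) {x : R}
    (hx : (∑ k ∈ Finset.range n, (p (k+1) - p k) * x * (p (k+1) - p k)) = 1) :
    Ed n p x := by
  intro k hk
  have key := congrArg (fun t => (p (k+1) - p k) * t * (p (k+1) - p k)) hx
  try simp only at key
  rw [Finset.mul_sum, Finset.sum_mul] at key
  have term : ∀ j ∈ Finset.range n,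
      (p (k+1) - p k) * ((p (j+1) - p j) * x * (p (j+1) - p j)) * (p (k+1) - p k)
        = if j = k then (p (k+1) - p k) * x * (p (k+1) - p k) else 0 := by
    intro j hj'
    have hj : j < n := Finset.mem_range.mp hj'
    by_cases hjk : j = k
    · subst hjk
      rw [if_pos rfl]
      calc (p (j+1) - p j) * ((p (j+1) - p j) * x * (p (j+1) - p j)) * (p (j+1) - p j)
          = ((p (j+1) - p j)*(p (j+1) - p j)) * x * ((p (j+1) - p j)*(p (j+1) - p j)) := by
            noncomm_ring
      _ = (p (j+1) - p j) * x * ((p (j+1) - p j)*(p (j+1) - p j)) := by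
            rw [e_idem hid hlo hro hj]
      _ = (p (j+1) - p j) * x * (p (j+1) - p j) := by rw [e_idem hid hlo hro hj]
    · rw [if_neg hjk]
      have h1 : (p (k+1) - p k) * (p (j+1) - p j) = 0 :=
        e_orth hid hlo hro hk hj (Ne.symm hjk)
      calc (p (k+1) - p k) * ((p (j+1) - p j) * x * (p (j+1) - p j)) * (p (k+1) - p k)
          = ((p (k+1) - p k) * (p (j+1) - p j)) * (x * ((p (j+1) - p j) * (p (k+1) - p k))) := by
            noncomm_ring
      _ = 0 * (x * ((p (j+1) - p j) * (p (k+1) - p k))) :=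
            congrArg (· * (x * ((p (j+1) - p j) * (p (k+1) - p k)))) h1
      _ = 0 := zero_mul _
  rw [Finset.sum_congr rfl term, Finset.sum_ite_eq' (Finset.range n) k
    (fun _ => (p (k+1) - p k) * x * (p (k+1) - p k)),
    if_pos (Finset.mem_range.mpr hk)] at key
  have he2 : (p (k+1) - p k) * 1 * (p (k+1) - p k) = p (k+1) - p k := by
    rw [mul_one]; exact e_idem hid hlo hro hk
  rw [key]
  exact he2

lemma lo_of_comm (hid : ∀ k ≤ n, p k * p k = p k) {d : R}
    (hd : ∀ k ≤ n, p k * d = d * p k) : Lo n p d := by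
  intro k hk
  calc p k * d = d * p k := hd k hk
  _ = d * (p k * p k) := congrArg (d * ·) (hid k hk).symm
  _ = (d * p k) * p k := by noncomm_ring
  _ = (p k * d) * p k := congrArg (· * p k) (hd k hk).symm

lemma up_of_comm (hid : ∀ k ≤ n, p k * p k = p k) {d : R}
    (hd : ∀ k ≤ n, p k * d = d * p k) : Up n p d := by
  intro k hk
  calc d * p k = p k * d := (hd k hk).symm
  _ = (p k * p k) * d := congrArg (· * d) (hid k hk).symm
  _ = p k * (p k * d) := by noncomm_ring
  _ = p k * (d * p k) := congrArg (p k * ·) (hd k hk)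
  _ = p k * d * p k := by noncomm_ring

lemma diag_sum (hid : ∀ k ≤ n, p k * p k = p k) (hlo : ∀ k < n, p (k+1) * p k = p k)
    (hro : ∀ k < n, p k * p (k+1) = p k) (h0 : p 0 = 0) (h1 : p n = 1) {w : R}
    (hw : ∀ k ≤ n, p k * w = w * p k) :
    w = ∑ k ∈ Finset.range n, (p (k+1) - p k) * w * (p (k+1) - p k) := by
  have hterm : ∀ k ∈ Finset.range n,
      (p (k+1) - p k) * w * (p (k+1) - p k) = w * (p (k+1) - p k) := by
    intro k hk'
    have hk : k < n := Finset.mem_range.mp hk'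
    have hew : (p (k+1) - p k) * w = w * (p (k+1) - p k) := by
      rw [sub_mul, mul_sub, hw (k+1) hk, hw k hk.le]
    calc (p (k+1) - p k) * w * (p (k+1) - p k)
        = (w * (p (k+1) - p k)) * (p (k+1) - p k) := congrArg (· * (p (k+1) - p k)) hew
    _ = w * ((p (k+1) - p k) * (p (k+1) - p k)) := by noncomm_ring
    _ = w * (p (k+1) - p k) := congrArg (w * ·) (e_idem hid hlo hro hk)
  rw [Finset.sum_congr rfl hterm, ← Finset.mul_sum, e_sum h0 h1, mul_one]

lemma ed_mul_up (hid : ∀ k ≤ n, p k * p k = p k) (hlo : ∀ k < n, p (k+1) * p k = p k)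
    (hro : ∀ k < n, p k * p (k+1) = p k)
    {x y : R} (hx : Up n p x) (hy : Up n p y) {k : ℕ} (hk : k < n) :
    (p (k+1) - p k) * (x * y) * (p (k+1) - p k)
      = ((p (k+1) - p k) * x * (p (k+1) - p k)) * ((p (k+1) - p k) * y * (p (k+1) - p k)) := by
  have h1 : k + 1 ≤ n := hk
  have hep : (p (k+1) - p k) * p k = 0 := ep_zero hid hlo hk
  have hee := e_idem hid hlo hro hk
  set e := p (k+1) - p k with he
  have c1 : p (k+1) * (y * p (k+1)) = y * p (k+1) := by
    calc p (k+1)*(y*p (k+1)) = p (k+1)*(p (k+1)*y*p (k+1)) := congrArg (p (k+1) * ·) (hy (k+1) h1)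
    _ = (p (k+1)*p (k+1))*y*p (k+1) := by noncomm_ring
    _ = p (k+1)*y*p (k+1) := congrArg (fun t => t*y*p (k+1)) (hid (k+1) h1)
    _ = y*p (k+1) := (hy (k+1) h1).symm
  have c2 : p (k+1) * (y * p k) = y * p k := by
    calc p (k+1)*(y*p k) = p (k+1)*(p k*y*p k) := congrArg (p (k+1) * ·) (hy k hk.le)
    _ = (p (k+1)*p k)*(y*p k) := by noncomm_ring
    _ = p k*(y*p k) := congrArg (· * (y*p k)) (hlo k hk)
    _ = p k*y*p k := by noncomm_ring
    _ = y*p k := (hy k hk.le).symm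
  have m1 : y * e = p (k+1) * (y * e) := by
    calc y*e = y*p (k+1) - y*p k := by rw [he, mul_sub]
    _ = p (k+1)*(y*p (k+1)) - p (k+1)*(y*p k) := by rw [c1, c2]
    _ = p (k+1)*(y*e) := by rw [he]; noncomm_ring
  have m2 : (e*x)*p k = 0 := by
    calc (e*x)*p k = e*(x*p k) := by noncomm_ring
    _ = e*(p k*x*p k) := congrArg (e * ·) (hx k hk.le)
    _ = (e*p k)*(x*p k) := by noncomm_ring
    _ = 0*(x*p k) := congrArg (· * (x*p k)) hep
    _ = 0 := zero_mul _
  have m3 : (e*x)*e = (e*x)*p (k+1) := by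
    calc (e*x)*e = (e*x)*p (k+1) - (e*x)*p k := by rw [he, mul_sub]
    _ = (e*x)*p (k+1) - 0 := by rw [m2]
    _ = (e*x)*p (k+1) := sub_zero _
  calc e*(x*y)*e = (e*x)*(y*e) := by noncomm_ring
  _ = (e*x)*(p (k+1)*(y*e)) := congrArg ((e*x) * ·) m1
  _ = ((e*x)*p (k+1))*(y*e) := by noncomm_ring
  _ = ((e*x)*e)*(y*e) := congrArg (· * (y*e)) m3.symm
  _ = (e*x*e)*(e*y*e) := by
      have h5 : (e*x*e)*(e*y*e) = (e*x)*((e*e)*(y*e)) := by noncomm_ring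
      rw [h5, hee]
      noncomm_ring

lemma gauss_unique (hid : ∀ k ≤ n, p k * p k = p k) (hlo : ∀ k < n, p (k+1) * p k = p k)
    (hro : ∀ k < n, p k * p (k+1) = p k) (h0 : p 0 = 0) (h1 : p n = 1) (hn : 1 ≤ n)
    {x d y dinv x' d' y' d'inv : R}
    (hx : Lo n p x) (hex : Ed n p x) (hy : Up n p y) (hey : Ed n p y)
    (hdcomm : ∀ k ≤ n, p k * d = d * p k)
    (hx' : Lo n p x') (hex' : Ed n p x') (hy' : Up n p y') (hey' : Ed n p y')
    (hd'comm : ∀ k ≤ n, p k * d' = d' * p k)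
    (hdi1 : d * dinv = 1) (hdi2 : dinv * d = 1)
    (hdi1' : d' * d'inv = 1) (hdi2' : d'inv * d' = 1)
    (heq : x * d * y = x' * d' * y') :
    x = x' ∧ d = d' ∧ y = y' := by
  obtain ⟨xi, hxi1, hxi2, hxiLo, hxiEd⟩ := nlo_inv hid hlo hro h0 h1 hn hx' hex'
  obtain ⟨yi, hyi1, hyi2, hyiUp, hyiEd⟩ := nup_inv hid hlo hro h0 h1 hn hy hey
  have hzeq : xi * x * d = d' * (y' * yi) := by
    calc xi*x*d = xi*x*d*(y*yi) := by rw [hyi1, mul_one]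
    _ = xi*(x*d*y)*yi := by noncomm_ring
    _ = xi*(x'*d'*y')*yi := congrArg (fun t => xi*t*yi) heq
    _ = (xi*x')*(d'*(y'*yi)) := by noncomm_ring
    _ = d'*(y'*yi) := by rw [hxi2, one_mul]
  have hdLo : Lo n p d := lo_of_comm hid hdcomm
  have hd'Up : Up n p d' := up_of_comm hid hd'comm
  have hzLo : Lo n p (xi*x*d) := lo_mul (lo_mul hxiLo hx) hdLo
  have hzUp : Up n p (xi*x*d) := by
    rw [hzeq]
    exact up_mul hd'Up (up_mul hy' hyiUp)
  have hzcomm : ∀ k ≤ n, p k * (xi*x*d) = (xi*x*d) * p k := by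
    intro k hk
    calc p k * (xi*x*d) = p k*(xi*x*d)*p k := hzLo k hk
    _ = (xi*x*d)*p k := (hzUp k hk).symm
  have hEdxix : Ed n p (xi*x) := ed_mul_lo' hid hlo hro hxiLo hx hxiEd hex
  have hEdy'yi : Ed n p (y'*yi) := ed_mul_up' hid hlo hro hy' hyiUp hey' hyiEd
  have hdiag1 : ∀ k < n, (p (k+1) - p k)*(xi*x*d)*(p (k+1) - p k)
      = (p (k+1) - p k)*d*(p (k+1) - p k) := by
    intro k hk
    rw [ed_mul_lo hid hlo hro (lo_mul hxiLo hx) hdLo hk, hEdxix k hk]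
    calc (p (k+1) - p k)*((p (k+1) - p k)*d*(p (k+1) - p k))
        = ((p (k+1) - p k)*(p (k+1) - p k))*d*(p (k+1) - p k) := by noncomm_ring
    _ = (p (k+1) - p k)*d*(p (k+1) - p k) :=
          congrArg (fun t => t*d*(p (k+1) - p k)) (e_idem hid hlo hro hk)
  have hdiag2 : ∀ k < n, (p (k+1) - p k)*(xi*x*d)*(p (k+1) - p k)
      = (p (k+1) - p k)*d'*(p (k+1) - p k) := by
    intro k hk
    have expand : xi*x*d = d'*(y'*yi) := hzeq
    rw [expand, ed_mul_up hid hlo hro hd'Up (up_mul hy' hyiUp) hk, hEdy'yi k hk]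
    calc ((p (k+1) - p k)*d'*(p (k+1) - p k))*(p (k+1) - p k)
        = (p (k+1) - p k)*d'*((p (k+1) - p k)*(p (k+1) - p k)) := by noncomm_ring
    _ = (p (k+1) - p k)*d'*(p (k+1) - p k) :=
          congrArg ((p (k+1) - p k)*d' * ·) (e_idem hid hlo hro hk)
  have hd_eq_z : d = xi*x*d := by
    calc d = ∑ k ∈ Finset.range n, (p (k+1) - p k)*d*(p (k+1) - p k) :=
          diag_sum hid hlo hro h0 h1 hdcomm
    _ = ∑ k ∈ Finset.range n, (p (k+1) - p k)*(xi*x*d)*(p (k+1) - p k) :=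
          Finset.sum_congr rfl (fun k hk => (hdiag1 k (Finset.mem_range.mp hk)).symm)
    _ = xi*x*d := (diag_sum hid hlo hro h0 h1 hzcomm).symm
  have hd'_eq_z : d' = xi*x*d := by
    have hd'comm2 : ∀ k ≤ n, p k * d' = d' * p k := hd'comm
    calc d' = ∑ k ∈ Finset.range n, (p (k+1) - p k)*d'*(p (k+1) - p k) :=
          diag_sum hid hlo hro h0 h1 hd'comm2
    _ = ∑ k ∈ Finset.range n, (p (k+1) - p k)*(xi*x*d)*(p (k+1) - p k) :=
          Finset.sum_congr rfl (fun k hk => (hdiag2 k (Finset.mem_range.mp hk)).symm)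
    _ = xi*x*d := (diag_sum hid hlo hro h0 h1 hzcomm).symm
  have hdd' : d = d' := hd_eq_z.trans hd'_eq_z.symm
  have hxix : xi*x = 1 := by
    calc xi*x = xi*x*(d*dinv) := by rw [hdi1, mul_one]
    _ = (xi*x*d)*dinv := by noncomm_ring
    _ = d*dinv := congrArg (· * dinv) hd_eq_z.symm
    _ = 1 := hdi1
  have hxx' : x = x' := by
    calc x = 1*x := (one_mul _).symm
    _ = (x'*xi)*x := congrArg (· * x) hxi1.symm
    _ = x'*(xi*x) := by noncomm_ring
    _ = x'*1 := congrArg (x' * ·) hxix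
    _ = x' := mul_one _
  have hy'yi : y'*yi = 1 := by
    have hz' : d' * (y'*yi) = d' := by rw [← hzeq]; exact hd'_eq_z.symm
    calc y'*yi = (d'inv*d')*(y'*yi) := by rw [hdi2', one_mul]
    _ = d'inv*(d'*(y'*yi)) := by noncomm_ring
    _ = d'inv*d' := congrArg (d'inv * ·) hz'
    _ = 1 := hdi2'
  have hyy' : y = y' := by
    symm
    calc y' = y'*1 := (mul_one _).symm
    _ = y'*(yi*y) := congrArg (y' * ·) hyi2.symm
    _ = (y'*yi)*y := by noncomm_ring
    _ = 1*y := congrArg (· * y) hy'yi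
    _ = y := one_mul _
  exact ⟨hxx', hdd', hyy'⟩

end uniq2

lemma corner_triple {e x d y xi d' yi : R} (he : e*e = e)
    (hX : e*x = e*x*e) (hXi : e*xi = e*xi*e)
    (hY : y*e = e*y*e) (hYi : yi*e = e*yi*e)
    (hd : e*d = d*e) (hd' : e*d' = d'*e)
    (hxxi : x*xi = 1) (hxix : xi*x = 1)
    (hyyi : y*yi = 1) (hyiy : yi*y = 1)
    (hdd' : d*d' = 1) (hd'd : d'*d = 1) :
    ∃ w, e*w*e = w ∧ (e*(x*d*y)*e)*w = e ∧ w*(e*(x*d*y)*e) = e := by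
  have habs : ∀ z : R, e*(e*z*e) = e*z*e := by
    intro z
    calc e*(e*z*e) = (e*e)*z*e := by noncomm_ring
    _ = e*z*e := congrArg (fun t => t*z*e) he
  have rabs : ∀ z : R, (e*z*e)*e = e*z*e := by
    intro z
    calc (e*z*e)*e = e*z*(e*e) := by noncomm_ring
    _ = e*z*e := congrArg (e*z* ·) he
  have f1 : (e*x*e)*(e*xi*e) = e := by
    calc (e*x*e)*(e*xi*e) = (e*x)*((e*e)*(xi*e)) := by noncomm_ring
    _ = (e*x)*(e*(xi*e)) := by rw [he]
    _ = ((e*x)*e)*(xi*e) := by noncomm_ring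
    _ = (e*x)*(xi*e) := congrArg (· * (xi*e)) hX.symm
    _ = e*((x*xi)*e) := by noncomm_ring
    _ = e*(1*e) := congrArg (e * ·) (congrArg (· * e) hxxi)
    _ = e := by rw [one_mul, he]
  have f2 : (e*xi*e)*(e*x*e) = e := by
    calc (e*xi*e)*(e*x*e) = (e*xi)*((e*e)*(x*e)) := by noncomm_ring
    _ = (e*xi)*(e*(x*e)) := by rw [he]
    _ = ((e*xi)*e)*(x*e) := by noncomm_ring
    _ = (e*xi)*(x*e) := congrArg (· * (x*e)) hXi.symm
    _ = e*((xi*x)*e) := by noncomm_ring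
    _ = e*(1*e) := congrArg (e * ·) (congrArg (· * e) hxix)
    _ = e := by rw [one_mul, he]
  have f3 : (e*y*e)*(e*yi*e) = e := by
    calc (e*y*e)*(e*yi*e) = (e*y)*((e*e)*(yi*e)) := by noncomm_ring
    _ = (e*y)*(e*(yi*e)) := by rw [he]
    _ = (e*y)*(e*yi*e) := by noncomm_ring
    _ = (e*y)*(yi*e) := congrArg ((e*y) * ·) hYi.symm
    _ = e*((y*yi)*e) := by noncomm_ring
    _ = e*(1*e) := congrArg (e * ·) (congrArg (· * e) hyyi)
    _ = e := by rw [one_mul, he]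
  have f4 : (e*yi*e)*(e*y*e) = e := by
    calc (e*yi*e)*(e*y*e) = (e*yi)*((e*e)*(y*e)) := by noncomm_ring
    _ = (e*yi)*(e*(y*e)) := by rw [he]
    _ = (e*yi)*(e*y*e) := by noncomm_ring
    _ = (e*yi)*(y*e) := congrArg ((e*yi) * ·) hY.symm
    _ = e*((yi*y)*e) := by noncomm_ring
    _ = e*(1*e) := congrArg (e * ·) (congrArg (· * e) hyiy)
    _ = e := by rw [one_mul, he]
  have f5 : (e*d*e)*(e*d'*e) = e := by
    calc (e*d*e)*(e*d'*e) = (e*d)*((e*e)*(d'*e)) := by noncomm_ring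
    _ = (e*d)*(e*(d'*e)) := by rw [he]
    _ = (e*d)*((e*d')*e) := by noncomm_ring
    _ = (e*d)*((d'*e)*e) := congrArg ((e*d) * ·) (congrArg (· * e) hd')
    _ = (e*d)*(d'*(e*e)) := by noncomm_ring
    _ = (e*d)*(d'*e) := by rw [he]
    _ = e*((d*d')*e) := by noncomm_ring
    _ = e*(1*e) := congrArg (e * ·) (congrArg (· * e) hdd')
    _ = e := by rw [one_mul, he]
  have f6 : (e*d'*e)*(e*d*e) = e := by
    calc (e*d'*e)*(e*d*e) = (e*d')*((e*e)*(d*e)) := by noncomm_ring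
    _ = (e*d')*(e*(d*e)) := by rw [he]
    _ = (e*d')*((e*d)*e) := by noncomm_ring
    _ = (e*d')*((d*e)*e) := congrArg ((e*d') * ·) (congrArg (· * e) hd)
    _ = (e*d')*(d*(e*e)) := by noncomm_ring
    _ = (e*d')*(d*e) := by rw [he]
    _ = e*((d'*d)*e) := by noncomm_ring
    _ = e*(1*e) := congrArg (e * ·) (congrArg (· * e) hd'd)
    _ = e := by rw [one_mul, he]
  have g1 : (e*d*e)*(e*y*e) = d*(y*e) := by
    calc (e*d*e)*(e*y*e) = (e*d)*((e*e)*(y*e)) := by noncomm_ring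
    _ = (e*d)*(e*(y*e)) := by rw [he]
    _ = (e*d)*(e*y*e) := by noncomm_ring
    _ = (e*d)*(y*e) := congrArg ((e*d) * ·) hY.symm
    _ = (d*e)*(y*e) := congrArg (· * (y*e)) hd
    _ = d*(e*y*e) := by noncomm_ring
    _ = d*(y*e) := congrArg (d * ·) hY.symm
  have main1 : e*(x*d*y)*e = (e*x*e)*((e*d*e)*(e*y*e)) := by
    rw [g1]
    calc e*(x*d*y)*e = (e*x)*(d*(y*e)) := by noncomm_ring
    _ = (e*x*e)*(d*(y*e)) := congrArg (· * (d*(y*e))) hX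
  refine ⟨(e*yi*e)*((e*d'*e)*(e*xi*e)), ?_, ?_, ?_⟩
  · calc e*((e*yi*e)*((e*d'*e)*(e*xi*e)))*e
        = (e*(e*yi*e))*((e*d'*e)*((e*xi*e)*e)) := by noncomm_ring
    _ = (e*yi*e)*((e*d'*e)*((e*xi*e)*e)) :=
          congrArg (· * ((e*d'*e)*((e*xi*e)*e))) (habs yi)
    _ = (e*yi*e)*((e*d'*e)*(e*xi*e)) :=
          congrArg (fun t => (e*yi*e)*((e*d'*e)*t)) (rabs xi)
  · rw [main1]
    calc ((e*x*e)*((e*d*e)*(e*y*e)))*((e*yi*e)*((e*d'*e)*(e*xi*e)))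
        = (e*x*e)*((e*d*e)*(((e*y*e)*(e*yi*e))*((e*d'*e)*(e*xi*e)))) := by noncomm_ring
    _ = (e*x*e)*((e*d*e)*(e*((e*d'*e)*(e*xi*e)))) := by rw [f3]
    _ = (e*x*e)*((e*d*e)*((e*(e*d'*e))*(e*xi*e))) := by noncomm_ring
    _ = (e*x*e)*((e*d*e)*((e*d'*e)*(e*xi*e))) := by rw [habs d']
    _ = (e*x*e)*(((e*d*e)*(e*d'*e))*(e*xi*e)) := by noncomm_ring
    _ = (e*x*e)*(e*(e*xi*e)) := by rw [f5]
    _ = (e*x*e)*(e*xi*e) := by rw [habs xi]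
    _ = e := f1
  · rw [main1]
    calc ((e*yi*e)*((e*d'*e)*(e*xi*e)))*((e*x*e)*((e*d*e)*(e*y*e)))
        = (e*yi*e)*((e*d'*e)*(((e*xi*e)*(e*x*e))*((e*d*e)*(e*y*e)))) := by noncomm_ring
    _ = (e*yi*e)*((e*d'*e)*(e*((e*d*e)*(e*y*e)))) := by rw [f2]
    _ = (e*yi*e)*((e*d'*e)*((e*(e*d*e))*(e*y*e))) := by noncomm_ring
    _ = (e*yi*e)*((e*d'*e)*((e*d*e)*(e*y*e))) := by rw [habs d]
    _ = (e*yi*e)*(((e*d'*e)*(e*d*e))*(e*y*e)) := by noncomm_ring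
    _ = (e*yi*e)*(e*(e*y*e)) := by rw [f6]
    _ = (e*yi*e)*(e*y*e) := by rw [habs y]
    _ = e := f4

section exist

lemma corner_left {e x : R} (he : e*e = e) (h : e*x*e = x) : e*x = x := by
  calc e*x = e*(e*x*e) := congrArg (e * ·) h.symm
  _ = (e*e)*x*e := by noncomm_ring
  _ = e*x*e := congrArg (fun z => z*x*e) he
  _ = x := h

lemma corner_right {e x : R} (he : e*e = e) (h : e*x*e = x) : x*e = x := by
  calc x*e = (e*x*e)*e := congrArg (· * e) h.symm
  _ = e*x*(e*e) := by noncomm_ring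
  _ = e*x*e := congrArg (e*x* ·) he
  _ = x := h

lemma gauss_exists (n : ℕ) (hn : 1 ≤ n) :
    ∀ (p : ℕ → R), p 0 = 0 →
    (∀ k ≤ n, p k * p k = p k) →
    (∀ k < n, p (k+1) * p k = p k) →
    (∀ k < n, p k * p (k+1) = p k) →
    ∀ g : R, p n * g * p n = g →
    (∀ j, 1 ≤ j → j ≤ n →
      ∃ w, p j * w * p j = w ∧ (p j * g * p j) * w = p j ∧ w * (p j * g * p j) = p j) →
    ∃ x d y d' : R,
      (p n * x * p n = x ∧ Lo n p x ∧ Ed n p x) ∧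
      (p n * y * p n = y ∧ Up n p y ∧ Ed n p y) ∧
      (p n * d * p n = d ∧ p n * d' * p n = d' ∧ d * d' = p n ∧ d' * d = p n ∧
        (∀ k ≤ n, p k * d = d * p k) ∧ (∀ k ≤ n, p k * d' = d' * p k)) ∧
      g = x * d * y := by
  induction n, hn using Nat.le_induction with
  | base =>
    intro p h0 hid hlo hro g hgq hc
    obtain ⟨b, hb0, hb1, hb2⟩ := hc 1 le_rfl le_rfl
    have hq := hid 1 le_rfl
    have hgl : p 1 * g = g := corner_left hq hgq
    have hgr : g * p 1 = g := corner_right hq hgq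
    have hbl : p 1 * b = b := corner_left hq hb0
    have hbr : b * p 1 = b := corner_right hq hb0
    refine ⟨p 1, g, p 1, b, ⟨?_, ?_, ?_⟩, ⟨?_, ?_, ?_⟩, ⟨?_, ?_, ?_, ?_, ?_, ?_⟩, ?_⟩
    · rw [hq, hq]
    · intro k hk
      interval_cases k
      · rw [h0]; simp
      · rw [hq, hq]
    · intro k hk
      have : k = 0 := by omega
      subst this
      simp only [h0, sub_zero, zero_add]
      rw [hq, hq]
    · rw [hq, hq]
    · intro k hk
      interval_cases k
      · rw [h0]; simp
      · rw [hq, hq]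
    · intro k hk
      have : k = 0 := by omega
      subst this
      simp only [h0, sub_zero, zero_add]
      rw [hq, hq]
    · exact hgq
    · exact hb0
    · rw [hgq] at hb1; exact hb1
    · rw [hgq] at hb2; exact hb2
    · intro k hk
      interval_cases k
      · rw [h0]; simp
      · rw [hgl, hgr]
    · intro k hk
      interval_cases k
      · rw [h0]; simp
      · rw [hbl, hbr]
    · exact hgq.symm
  | succ n hn ih =>
    intro p h0 hid hlo hro g hgq hc
    have hid' : ∀ k ≤ n, p k * p k = p k := fun k hk => hid k (by omega)
    have hlo' : ∀ k < n, p (k+1) * p k = p k := fun k hk => hlo k (by omega)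
    have hro' : ∀ k < n, p k * p (k+1) = p k := fun k hk => hro k (by omega)
    have hq : p n * p n = p n := hid n (by omega)
    have hq' : p (n+1) * p (n+1) = p (n+1) := hid (n+1) le_rfl
    have hqq' : p n * p (n+1) = p n := hro n (by omega)
    have hq'q : p (n+1) * p n = p n := hlo n (by omega)
    obtain ⟨b, hb0, hb1, hb2⟩ := hc n hn (by omega)
    obtain ⟨G, hG0, hG1, hG2⟩ := hc (n+1) (by omega) le_rfl
    obtain ⟨r, hrdef⟩ : ∃ t : R, t = p (n+1) - p n := ⟨_, rfl⟩
    have hrr : r*r = r := by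
      rw [hrdef, mul_sub, sub_mul, sub_mul, hq', hq, hq'q, hqq']; abel
    have hqr : p n*r = 0 := by rw [hrdef, mul_sub, hqq', hq, sub_self]
    have hrq : r*p n = 0 := by rw [hrdef, sub_mul, hq'q, hq, sub_self]
    have hq'r : p (n+1)*r = r := by rw [hrdef, mul_sub, hq', hq'q]
    have hrq' : r*p (n+1) = r := by rw [hrdef, sub_mul, hq', hqq']
    have hqb : p n*b = b := corner_left hq hb0
    have hbq : b*p n = b := corner_right hq hb0
    have hq'b : p (n+1)*b = b := by
      calc p (n+1)*b = p (n+1)*(p n*b) := congrArg (p (n+1) * ·) hqb.symm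
      _ = (p (n+1)*p n)*b := by noncomm_ring
      _ = p n*b := congrArg (· * b) hq'q
      _ = b := hqb
    have hbq' : b*p (n+1) = b := by
      calc b*p (n+1) = (b*p n)*p (n+1) := congrArg (· * p (n+1)) hbq.symm
      _ = b*(p n*p (n+1)) := by noncomm_ring
      _ = b*p n := congrArg (b * ·) hqq'
      _ = b := hbq
    have hrb : r*b = 0 := by rw [hrdef, sub_mul, hq'b, hqb, sub_self]
    have hbr : b*r = 0 := by rw [hrdef, mul_sub, hbq', hbq, sub_self]
    have hq'g : p (n+1)*g = g := corner_left hq' hgq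
    have hgq' : g*p (n+1) = g := corner_right hq' hgq
    have hqgb : p n*(g*b) = p n := by
      calc p n*(g*b) = p n*(g*(p n*b)) := congrArg (fun z => p n*(g*z)) hqb.symm
      _ = (p n*g*p n)*b := by noncomm_ring
      _ = p n := hb1
    have hbgq : b*(g*p n) = p n := by
      calc b*(g*p n) = (b*p n)*(g*p n) := congrArg (· * (g*p n)) hbq.symm
      _ = b*(p n*g*p n) := by noncomm_ring
      _ = p n := hb2
    have hbgb : b*(g*b) = b := by
      calc b*(g*b) = b*(g*(p n*b)) := congrArg (fun z => b*(g*z)) hqb.symm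
      _ = (b*(g*p n))*b := by noncomm_ring
      _ = p n*b := congrArg (· * b) hbgq
      _ = b := hqb
    have hgG : g*G = p (n+1) := by rw [hgq] at hG1; exact hG1
    have hGg : G*g = p (n+1) := by rw [hgq] at hG2; exact hG2
    have hq'G : p (n+1)*G = G := corner_left hq' hG0
    have hGq' : G*p (n+1) = G := corner_right hq' hG0
    -- apply induction hypothesis to the corner p n * g * p n
    have habs_r : ∀ j ≤ n, p j * p n = p j := fun j hj => pabs_r hid hro j n hj (by omega)
    have habs_l : ∀ j ≤ n, p n * p j = p j := fun j hj => pabs_l hid hlo j n hj (by omega)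
    have haq : p n * (p n*g*p n) * p n = p n*g*p n := by
      calc p n * (p n*g*p n) * p n = (p n*p n)*g*(p n*p n) := by noncomm_ring
      _ = p n*g*(p n*p n) := congrArg (fun z => z*g*(p n*p n)) hq
      _ = p n*g*p n := congrArg (p n*g* ·) hq
    have hc' : ∀ j, 1 ≤ j → j ≤ n → ∃ w, p j * w * p j = w ∧
        (p j * (p n*g*p n) * p j) * w = p j ∧ w * (p j * (p n*g*p n) * p j) = p j := by
      intro j hj1 hjn
      have hred : p j * (p n*g*p n) * p j = p j * g * p j := by
        calc p j * (p n*g*p n) * p j = (p j*p n)*g*(p n*p j) := by noncomm_ring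
        _ = p j*g*(p n*p j) := congrArg (fun z => z*g*(p n*p j)) (habs_r j hjn)
        _ = p j*g*p j := congrArg (p j*g* ·) (habs_l j hjn)
      rw [hred]
      exact hc j hj1 (by omega)
    obtain ⟨x₂, d₂, y₂, d₂', ⟨hx₂c, hx₂lo, hx₂ed⟩, ⟨hy₂c, hy₂up, hy₂ed⟩,
      ⟨hd₂c, hd₂'c, hdd', hd'd, hd₂comm, hd₂'comm⟩, hadec⟩ :=
      ih p h0 hid' hlo' hro' (p n*g*p n) haq hc'
    -- absorption facts for the IH outputs
    have hqx₂ : p n*x₂ = x₂ := corner_left hq hx₂c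
    have hx₂q : x₂*p n = x₂ := corner_right hq hx₂c
    have hqy₂ : p n*y₂ = y₂ := corner_left hq hy₂c
    have hy₂q : y₂*p n = y₂ := corner_right hq hy₂c
    have hqd₂ : p n*d₂ = d₂ := corner_left hq hd₂c
    have hd₂q : d₂*p n = d₂ := corner_right hq hd₂c
    have hqd₂' : p n*d₂' = d₂' := corner_left hq hd₂'c
    have hd₂'q : d₂'*p n = d₂' := corner_right hq hd₂'c
    have habsorb : ∀ z : R, p n*z = z → z*p n = z →
        (p (n+1)*z = z ∧ z*p (n+1) = z ∧ r*z = 0 ∧ z*r = 0) := by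
      intro z hl hr
      refine ⟨?_, ?_, ?_, ?_⟩
      · calc p (n+1)*z = p (n+1)*(p n*z) := congrArg (p (n+1) * ·) hl.symm
        _ = (p (n+1)*p n)*z := by noncomm_ring
        _ = p n*z := congrArg (· * z) hq'q
        _ = z := hl
      · calc z*p (n+1) = (z*p n)*p (n+1) := congrArg (· * p (n+1)) hr.symm
        _ = z*(p n*p (n+1)) := by noncomm_ring
        _ = z*p n := congrArg (z * ·) hqq'
        _ = z := hr
      · calc r*z = r*(p n*z) := congrArg (r * ·) hl.symm
        _ = (r*p n)*z := by noncomm_ring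
        _ = 0*z := congrArg (· * z) hrq
        _ = 0 := zero_mul _
      · calc z*r = (z*p n)*r := congrArg (· * r) hr.symm
        _ = z*(p n*r) := by noncomm_ring
        _ = z*0 := congrArg (z * ·) hqr
        _ = 0 := mul_zero _
    obtain ⟨hq'x₂, hx₂q', hrx₂, hx₂r⟩ := habsorb x₂ hqx₂ hx₂q
    obtain ⟨hq'y₂, hy₂q', hry₂, hy₂r⟩ := habsorb y₂ hqy₂ hy₂q
    obtain ⟨hq'd₂, hd₂q', hrd₂, hd₂r⟩ := habsorb d₂ hqd₂ hd₂q
    obtain ⟨hq'd₂', hd₂'q', hrd₂', hd₂'r⟩ := habsorb d₂' hqd₂' hd₂'q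
    -- the 2x2 pieces
    obtain ⟨x₁, hx₁def⟩ : ∃ t : R, t = p (n+1) + r*g*b := ⟨_, rfl⟩
    obtain ⟨y₁, hy₁def⟩ : ∃ t : R, t = p (n+1) + b*g*r := ⟨_, rfl⟩
    obtain ⟨S, hSdef⟩ : ∃ t : R, t = r*g*r - r*g*b*g*r := ⟨_, rfl⟩
    have hgdec : g = p n*(g*p n) + p n*(g*r) + r*(g*p n) + r*(g*r) := by
      have h2 : g = (p n+r)*g*(p n+r) := by
        rw [show p n + r = p (n+1) by rw [hrdef]; abel, hq'g, hgq']
      conv_lhs => rw [h2]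
      noncomm_ring
    have I1 : g = x₁ * (p n*g*p n + S) * y₁ := by
      rw [hx₁def, hy₁def, hSdef]
      conv_rhs => rw [hgdec]
      simp only [mul_add, add_mul, mul_sub, sub_mul, mul_assoc,
        hq, rmul hq, hq', rmul hq', hqq', rmul hqq', hq'q, rmul hq'q,
        hrr, rmul hrr, hqr, rmul hqr, hrq, rmul hrq, hq'r, rmul hq'r, hrq', rmul hrq',
        hqb, rmul hqb, hbq, rmul hbq, hq'b, rmul hq'b, hbq', rmul hbq',
        hrb, rmul hrb, hbr, rmul hbr, hq'g, rmul hq'g, hgq', rmul hgq',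
        hqgb, rmul2 hqgb, hbgq, rmul2 hbgq, hbgb, rmul2 hbgb,
        zero_mul, mul_zero, add_zero, zero_add, sub_zero, zero_sub, neg_zero]
      conv_lhs => rw [hgdec]
      abel
    have hx₁'x₁ : (p (n+1) - r*g*b) * x₁ = p (n+1) := by
      rw [hx₁def]
      simp only [mul_add, add_mul, mul_sub, sub_mul, mul_assoc,
        hq, rmul hq, hq', rmul hq', hqq', rmul hqq', hq'q, rmul hq'q,
        hrr, rmul hrr, hqr, rmul hqr, hrq, rmul hrq, hq'r, rmul hq'r, hrq', rmul hrq',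
        hqb, rmul hqb, hbq, rmul hbq, hq'b, rmul hq'b, hbq', rmul hbq',
        hrb, rmul hrb, hbr, rmul hbr, hq'g, rmul hq'g, hgq', rmul hgq',
        hqgb, rmul2 hqgb, hbgq, rmul2 hbgq, hbgb, rmul2 hbgb,
        zero_mul, mul_zero, add_zero, zero_add, sub_zero, zero_sub, neg_zero]
      abel
    have hx₁x₁' : x₁ * (p (n+1) - r*g*b) = p (n+1) := by
      rw [hx₁def]
      simp only [mul_add, add_mul, mul_sub, sub_mul, mul_assoc,
        hq, rmul hq, hq', rmul hq', hqq', rmul hqq', hq'q, rmul hq'q,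
        hrr, rmul hrr, hqr, rmul hqr, hrq, rmul hrq, hq'r, rmul hq'r, hrq', rmul hrq',
        hqb, rmul hqb, hbq, rmul hbq, hq'b, rmul hq'b, hbq', rmul hbq',
        hrb, rmul hrb, hbr, rmul hbr, hq'g, rmul hq'g, hgq', rmul hgq',
        hqgb, rmul2 hqgb, hbgq, rmul2 hbgq, hbgb, rmul2 hbgb,
        zero_mul, mul_zero, add_zero, zero_add, sub_zero, zero_sub, neg_zero]
      abel
    have hy₁'y₁ : (p (n+1) - b*g*r) * y₁ = p (n+1) := by
      rw [hy₁def]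
      simp only [mul_add, add_mul, mul_sub, sub_mul, mul_assoc,
        hq, rmul hq, hq', rmul hq', hqq', rmul hqq', hq'q, rmul hq'q,
        hrr, rmul hrr, hqr, rmul hqr, hrq, rmul hrq, hq'r, rmul hq'r, hrq', rmul hrq',
        hqb, rmul hqb, hbq, rmul hbq, hq'b, rmul hq'b, hbq', rmul hbq',
        hrb, rmul hrb, hbr, rmul hbr, hq'g, rmul hq'g, hgq', rmul hgq',
        hqgb, rmul2 hqgb, hbgq, rmul2 hbgq, hbgb, rmul2 hbgb,
        zero_mul, mul_zero, add_zero, zero_add, sub_zero, zero_sub, neg_zero]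
      abel
    have hy₁y₁' : y₁ * (p (n+1) - b*g*r) = p (n+1) := by
      rw [hy₁def]
      simp only [mul_add, add_mul, mul_sub, sub_mul, mul_assoc,
        hq, rmul hq, hq', rmul hq', hqq', rmul hqq', hq'q, rmul hq'q,
        hrr, rmul hrr, hqr, rmul hqr, hrq, rmul hrq, hq'r, rmul hq'r, hrq', rmul hrq',
        hqb, rmul hqb, hbq, rmul hbq, hq'b, rmul hq'b, hbq', rmul hbq',
        hrb, rmul hrb, hbr, rmul hbr, hq'g, rmul hq'g, hgq', rmul hgq',
        hqgb, rmul2 hqgb, hbgq, rmul2 hbgq, hbgb, rmul2 hbgb,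
        zero_mul, mul_zero, add_zero, zero_add, sub_zero, zero_sub, neg_zero]
      abel
    have hq'x₁ : p (n+1) * x₁ = x₁ := by
      rw [hx₁def, mul_add]
      rw [hq']
      congr 1
      calc p (n+1)*(r*g*b) = (p (n+1)*r)*g*b := by noncomm_ring
      _ = r*g*b := congrArg (fun z => z*g*b) hq'r
    have hx₁q' : x₁ * p (n+1) = x₁ := by
      rw [hx₁def, add_mul, hq']
      congr 1
      calc (r*g*b)*p (n+1) = r*g*(b*p (n+1)) := by noncomm_ring
      _ = r*g*b := congrArg (r*g* ·) hbq'
    have hq'y₁ : p (n+1) * y₁ = y₁ := by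
      rw [hy₁def, mul_add, hq']
      congr 1
      calc p (n+1)*(b*g*r) = (p (n+1)*b)*g*r := by noncomm_ring
      _ = b*g*r := congrArg (fun z => z*g*r) hq'b
    have hy₁q' : y₁ * p (n+1) = y₁ := by
      rw [hy₁def, add_mul, hq']
      congr 1
      calc (b*g*r)*p (n+1) = b*g*(r*p (n+1)) := by noncomm_ring
      _ = b*g*r := congrArg (b*g* ·) hrq'
    -- S facts
    have hrS : r*S = S := by
      rw [hSdef, mul_sub]
      congr 1
      · calc r*(r*g*r) = (r*r)*g*r := by noncomm_ring
        _ = r*g*r := congrArg (fun z => z*g*r) hrr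
      · calc r*(r*g*b*g*r) = (r*r)*g*b*g*r := by noncomm_ring
        _ = r*g*b*g*r := congrArg (fun z => z*g*b*g*r) hrr
    have hSr : S*r = S := by
      rw [hSdef, sub_mul]
      congr 1
      · calc (r*g*r)*r = r*g*(r*r) := by noncomm_ring
        _ = r*g*r := congrArg (r*g* ·) hrr
      · calc (r*g*b*g*r)*r = r*g*b*g*(r*r) := by noncomm_ring
        _ = r*g*b*g*r := congrArg (r*g*b*g* ·) hrr
    have hqS : p n*S = 0 := by
      calc p n*S = p n*(r*S) := congrArg (p n * ·) hrS.symm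
      _ = (p n*r)*S := by noncomm_ring
      _ = 0*S := congrArg (· * S) hqr
      _ = 0 := zero_mul _
    have hSq : S*p n = 0 := by
      calc S*p n = (S*r)*p n := congrArg (· * p n) hSr.symm
      _ = S*(r*p n) := by noncomm_ring
      _ = S*0 := congrArg (S * ·) hrq
      _ = 0 := mul_zero _
    have hq'S : p (n+1)*S = S := by
      calc p (n+1)*S = p (n+1)*(r*S) := congrArg (p (n+1) * ·) hrS.symm
      _ = (p (n+1)*r)*S := by noncomm_ring
      _ = r*S := congrArg (· * S) hq'r
      _ = S := hrS
    have hSq' : S*p (n+1) = S := by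
      calc S*p (n+1) = (S*r)*p (n+1) := congrArg (· * p (n+1)) hSr.symm
      _ = S*(r*p (n+1)) := by noncomm_ring
      _ = S*r := congrArg (S * ·) hrq'
      _ = S := hSr
    have hq'd₁ : p (n+1) * (p n*g*p n + S) = p n*g*p n + S := by
      rw [mul_add, hq'S]
      congr 1
      calc p (n+1)*(p n*g*p n) = (p (n+1)*p n)*g*p n := by noncomm_ring
      _ = p n*g*p n := congrArg (fun z => z*g*p n) hq'q
    have hd₁q' : (p n*g*p n + S) * p (n+1) = p n*g*p n + S := by
      rw [add_mul, hSq']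
      congr 1
      calc (p n*g*p n)*p (n+1) = p n*g*(p n*p (n+1)) := by noncomm_ring
      _ = p n*g*p n := congrArg (p n*g* ·) hqq'
    have hd₁ : p n*g*p n + S = (p (n+1) - r*g*b) * g * (p (n+1) - b*g*r) := by
      symm
      calc (p (n+1) - r*g*b) * g * (p (n+1) - b*g*r)
          = (p (n+1) - r*g*b) * (x₁*(p n*g*p n + S)*y₁) * (p (n+1) - b*g*r) :=
            congrArg (fun z => (p (n+1) - r*g*b) * z * (p (n+1) - b*g*r)) I1
      _ = ((p (n+1) - r*g*b) * x₁) * ((p n*g*p n + S) * (y₁ * (p (n+1) - b*g*r))) := by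
            noncomm_ring
      _ = p (n+1) * ((p n*g*p n + S) * p (n+1)) := by rw [hx₁'x₁, hy₁y₁']
      _ = p (n+1) * (p n*g*p n + S) := congrArg (p (n+1) * ·) hd₁q'
      _ = p n*g*p n + S := hq'd₁
    obtain ⟨dd, hdddef⟩ : ∃ t : R, t = y₁ * G * x₁ := ⟨_, rfl⟩
    have hd₁dd : (p n*g*p n + S) * dd = p (n+1) := by
      rw [hd₁, hdddef]
      calc ((p (n+1) - r*g*b) * g * (p (n+1) - b*g*r)) * (y₁ * G * x₁)
          = (p (n+1) - r*g*b) * g * (((p (n+1) - b*g*r) * y₁) * (G * x₁)) := by noncomm_ring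
      _ = (p (n+1) - r*g*b) * g * (p (n+1) * (G * x₁)) := by rw [hy₁'y₁]
      _ = (p (n+1) - r*g*b) * (g * p (n+1)) * (G * x₁) := by noncomm_ring
      _ = (p (n+1) - r*g*b) * (g * G) * x₁ := by rw [hgq']; noncomm_ring
      _ = (p (n+1) - r*g*b) * p (n+1) * x₁ := by rw [hgG]
      _ = (p (n+1) - r*g*b) * (p (n+1) * x₁) := by noncomm_ring
      _ = (p (n+1) - r*g*b) * x₁ := congrArg ((p (n+1) - r*g*b) * ·) hq'x₁
      _ = p (n+1) := hx₁'x₁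
    have hddd₁ : dd * (p n*g*p n + S) = p (n+1) := by
      rw [hd₁, hdddef]
      calc (y₁ * G * x₁) * ((p (n+1) - r*g*b) * g * (p (n+1) - b*g*r))
          = y₁ * G * ((x₁ * (p (n+1) - r*g*b)) * (g * (p (n+1) - b*g*r))) := by noncomm_ring
      _ = y₁ * G * (p (n+1) * (g * (p (n+1) - b*g*r))) := by rw [hx₁x₁']
      _ = y₁ * ((G * p (n+1)) * g) * (p (n+1) - b*g*r) := by noncomm_ring
      _ = y₁ * (G * g) * (p (n+1) - b*g*r) := by rw [hGq']
      _ = y₁ * p (n+1) * (p (n+1) - b*g*r) := by rw [hGg]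
      _ = y₁ * (p (n+1) - b*g*r) := by rw [hy₁q']
      _ = p (n+1) := hy₁y₁'
    obtain ⟨S', hS'def⟩ : ∃ t : R, t = r*dd*r := ⟨_, rfl⟩
    have hd₁r : (p n*g*p n + S)*r = S := by
      rw [add_mul, hSr]
      have : (p n*g*p n)*r = 0 := by
        calc (p n*g*p n)*r = p n*g*(p n*r) := by noncomm_ring
        _ = p n*g*0 := congrArg (p n*g* ·) hqr
        _ = 0 := by rw [mul_zero]
      rw [this, zero_add]
    have hrd₁ : r*(p n*g*p n + S) = S := by
      rw [mul_add, hrS]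
      have : r*(p n*g*p n) = 0 := by
        calc r*(p n*g*p n) = (r*p n)*g*p n := by noncomm_ring
        _ = 0*g*p n := congrArg (fun z => z*g*p n) hrq
        _ = 0 := by rw [zero_mul, zero_mul]
      rw [this, zero_add]
    have hSS' : S*S' = r := by
      rw [hS'def]
      calc S*(r*dd*r) = (S*r)*(dd*r) := by noncomm_ring
      _ = S*(dd*r) := congrArg (· * (dd*r)) hSr
      _ = (r*(p n*g*p n + S))*(dd*r) := congrArg (· * (dd*r)) hrd₁.symm
      _ = r*((p n*g*p n + S)*dd)*r := by noncomm_ring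
      _ = r*p (n+1)*r := by rw [hd₁dd]
      _ = r*r := by rw [hrq']
      _ = r := hrr
    have hS'S : S'*S = r := by
      rw [hS'def]
      calc (r*dd*r)*S = (r*dd)*(r*S) := by noncomm_ring
      _ = (r*dd)*S := congrArg ((r*dd) * ·) hrS
      _ = (r*dd)*((p n*g*p n + S)*r) := congrArg ((r*dd) * ·) hd₁r.symm
      _ = r*(dd*(p n*g*p n + S))*r := by noncomm_ring
      _ = r*p (n+1)*r := by rw [hddd₁]
      _ = r*r := by rw [hrq']
      _ = r := hrr
    -- S' absorptions
    have hrS' : r*S' = S' := by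
      rw [hS'def]
      calc r*(r*dd*r) = (r*r)*dd*r := by noncomm_ring
      _ = r*dd*r := congrArg (fun z => z*dd*r) hrr
    have hS'r : S'*r = S' := by
      rw [hS'def]
      calc (r*dd*r)*r = r*dd*(r*r) := by noncomm_ring
      _ = r*dd*r := congrArg (r*dd* ·) hrr
    have hqS' : p n*S' = 0 := by
      calc p n*S' = p n*(r*S') := congrArg (p n * ·) hrS'.symm
      _ = (p n*r)*S' := by noncomm_ring
      _ = 0*S' := congrArg (· * S') hqr
      _ = 0 := zero_mul _
    have hS'q : S'*p n = 0 := by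
      calc S'*p n = (S'*r)*p n := congrArg (· * p n) hS'r.symm
      _ = S'*(r*p n) := by noncomm_ring
      _ = S'*0 := congrArg (S' * ·) hrq
      _ = 0 := mul_zero _
    have hq'S' : p (n+1)*S' = S' := by
      calc p (n+1)*S' = p (n+1)*(r*S') := congrArg (p (n+1) * ·) hrS'.symm
      _ = (p (n+1)*r)*S' := by noncomm_ring
      _ = r*S' := congrArg (· * S') hq'r
      _ = S' := hrS'
    have hS'q' : S'*p (n+1) = S' := by
      calc S'*p (n+1) = (S'*r)*p (n+1) := congrArg (· * p (n+1)) hS'r.symm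
      _ = S'*(r*p (n+1)) := by noncomm_ring
      _ = S'*r := congrArg (S' * ·) hrq'
      _ = S' := hS'r
    -- p k facts for k ≤ n
    have hpkq' : ∀ k ≤ n+1, p k * p (n+1) = p k := fun k hk => pabs_r hid hro k (n+1) hk le_rfl
    have hq'pk : ∀ k ≤ n+1, p (n+1) * p k = p k := fun k hk => pabs_l hid hlo k (n+1) hk le_rfl
    have hpkr : ∀ k ≤ n, p k * r = 0 := by
      intro k hk
      rw [hrdef, mul_sub, hpkq' k (by omega), habs_r k hk, sub_self]
    have hrpk : ∀ k ≤ n, r * p k = 0 := by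
      intro k hk
      rw [hrdef, sub_mul, hq'pk k (by omega), habs_l k hk, sub_self]
    have hpkS : ∀ k ≤ n, p k * S = 0 := by
      intro k hk
      calc p k*S = p k*(r*S) := congrArg (p k * ·) hrS.symm
      _ = (p k*r)*S := by noncomm_ring
      _ = 0*S := congrArg (· * S) (hpkr k hk)
      _ = 0 := zero_mul _
    have hSpk : ∀ k ≤ n, S * p k = 0 := by
      intro k hk
      calc S*p k = (S*r)*p k := congrArg (· * p k) hSr.symm
      _ = S*(r*p k) := by noncomm_ring
      _ = S*0 := congrArg (S * ·) (hrpk k hk)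
      _ = 0 := mul_zero _
    have hpkS' : ∀ k ≤ n, p k * S' = 0 := by
      intro k hk
      calc p k*S' = p k*(r*S') := congrArg (p k * ·) hrS'.symm
      _ = (p k*r)*S' := by noncomm_ring
      _ = 0*S' := congrArg (· * S') (hpkr k hk)
      _ = 0 := zero_mul _
    have hS'pk : ∀ k ≤ n, S' * p k = 0 := by
      intro k hk
      calc S'*p k = (S'*r)*p k := congrArg (· * p k) hS'r.symm
      _ = S'*(r*p k) := by noncomm_ring
      _ = S'*0 := congrArg (S' * ·) (hrpk k hk)
      _ = 0 := mul_zero _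
    -- e_k facts for k < n
    have hekr : ∀ k < n, (p (k+1) - p k)*r = 0 := by
      intro k hk
      rw [sub_mul, hpkr (k+1) hk, hpkr k (by omega), sub_self]
    have hrek : ∀ k < n, r*(p (k+1) - p k) = 0 := by
      intro k hk
      rw [mul_sub, hrpk (k+1) hk, hrpk k (by omega), sub_self]
    have hekq' : ∀ k < n, (p (k+1) - p k)*p (n+1) = p (k+1) - p k := by
      intro k hk
      rw [sub_mul, hpkq' (k+1) (by omega), hpkq' k (by omega)]
    -- x side
    have hx₁lo : Lo (n+1) p x₁ := by
      intro k hk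
      rcases eq_or_lt_of_le hk with h | h
      · rw [h, hq'x₁]
        exact hx₁q'.symm
      · have hkn : k ≤ n := by omega
        have l1 : p k * x₁ = p k := by
          rw [hx₁def, mul_add, hpkq' k (by omega)]
          have t : p k * (r*g*b) = 0 := by
            calc p k * (r*g*b) = (p k*r)*g*b := by noncomm_ring
            _ = 0*g*b := congrArg (fun z => z*g*b) (hpkr k hkn)
            _ = 0 := by rw [zero_mul, zero_mul]
          rw [t, add_zero]
        rw [l1]
        exact (hid k (by omega)).symm
    have hx₂rlo : Lo (n+1) p (x₂ + r) := by
      intro k hk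
      rcases eq_or_lt_of_le hk with h | h
      · have c1 : p (n+1)*(x₂+r) = x₂+r := by rw [mul_add, hq'x₂, hq'r]
        have c2 : (x₂+r)*p (n+1) = x₂+r := by rw [add_mul, hx₂q', hrq']
        rw [h, c1]
        exact c2.symm
      · have hkn : k ≤ n := by omega
        rw [mul_add, hpkr k hkn, add_zero]
        exact hx₂lo k hkn
    have hxlo : Lo (n+1) p (x₁*(x₂+r)) := lo_mul hx₁lo hx₂rlo
    have hx₁ed : Ed (n+1) p x₁ := by
      intro k hk
      rcases Nat.lt_succ_iff_lt_or_eq.mp hk with h | h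
      · have t2 : (p (k+1) - p k)*(r*g*b) = 0 := by
          calc (p (k+1) - p k)*(r*g*b) = ((p (k+1) - p k)*r)*g*b := by noncomm_ring
          _ = 0*g*b := congrArg (fun z => z*g*b) (hekr k h)
          _ = 0 := by rw [zero_mul, zero_mul]
        rw [hx₁def, mul_add, t2, add_zero, hekq' k h]
        exact e_idem hid hlo hro (by omega)
      · subst h
        rw [← hrdef, hx₁def, mul_add, hrq']
        have t3 : r*(r*g*b) = r*g*b := by
          calc r*(r*g*b) = (r*r)*g*b := by noncomm_ring
          _ = r*g*b := congrArg (fun z => z*g*b) hrr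
        have t4 : (r*g*b)*r = 0 := by
          calc (r*g*b)*r = r*g*(b*r) := by noncomm_ring
          _ = r*g*0 := congrArg (r*g* ·) hbr
          _ = 0 := mul_zero _
        rw [t3, add_mul, hrr, t4, add_zero]
    have hx₂red : Ed (n+1) p (x₂+r) := by
      intro k hk
      rcases Nat.lt_succ_iff_lt_or_eq.mp hk with h | h
      · rw [mul_add, hekr k h, add_zero]
        exact hx₂ed k h
      · subst h
        rw [← hrdef, mul_add, hrx₂, hrr, zero_add, hrr]
    have hxed : Ed (n+1) p (x₁*(x₂+r)) := ed_mul_lo' hid hlo hro hx₁lo hx₂rlo hx₁ed hx₂red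
    have hxc : p (n+1) * (x₁*(x₂+r)) * p (n+1) = x₁*(x₂+r) := by
      have c2 : (x₂+r)*p (n+1) = x₂+r := by rw [add_mul, hx₂q', hrq']
      calc p (n+1)*(x₁*(x₂+r))*p (n+1) = (p (n+1)*x₁)*((x₂+r)*p (n+1)) := by noncomm_ring
      _ = x₁*((x₂+r)*p (n+1)) := congrArg (· * ((x₂+r)*p (n+1))) hq'x₁
      _ = x₁*(x₂+r) := congrArg (x₁ * ·) c2
    -- y side
    have hy₁up : Up (n+1) p y₁ := by
      intro k hk
      rcases eq_or_lt_of_le hk with h | h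
      · rw [h, hy₁q', hq'y₁]
        exact hy₁q'.symm
      · have hkn : k ≤ n := by omega
        have l1 : y₁ * p k = p k := by
          rw [hy₁def, add_mul, hq'pk k (by omega)]
          have t : (b*g*r) * p k = 0 := by
            calc (b*g*r)*p k = b*g*(r*p k) := by noncomm_ring
            _ = b*g*0 := congrArg (b*g* ·) (hrpk k hkn)
            _ = 0 := mul_zero _
          rw [t, add_zero]
        have l2 : p k * y₁ * p k = p k := by
          rw [hy₁def, mul_add, add_mul, hpkq' k (by omega)]
          have t : p k*(b*g*r)*p k = 0 := by
            calc p k*(b*g*r)*p k = (p k*b)*g*(r*p k) := by noncomm_ring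
            _ = (p k*b)*g*0 := congrArg ((p k*b)*g* ·) (hrpk k hkn)
            _ = 0 := mul_zero _
          rw [t, add_zero, hid k (by omega)]
        rw [l1, l2]
    have hy₂rup : Up (n+1) p (y₂+r) := by
      intro k hk
      rcases eq_or_lt_of_le hk with h | h
      · have c1 : (y₂+r)*p (n+1) = y₂+r := by rw [add_mul, hy₂q', hrq']
        have c2 : p (n+1)*(y₂+r) = y₂+r := by rw [mul_add, hq'y₂, hq'r]
        rw [h, c1, c2]
        exact c1.symm
      · have hkn : k ≤ n := by omega
        rw [add_mul, mul_add, add_mul, hrpk k hkn, hpkr k hkn, zero_mul, add_zero, add_zero]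
        exact hy₂up k hkn
    have hyup : Up (n+1) p ((y₂+r)*y₁) := up_mul hy₂rup hy₁up
    have hy₁ed : Ed (n+1) p y₁ := by
      intro k hk
      rcases Nat.lt_succ_iff_lt_or_eq.mp hk with h | h
      · have t2 : (p (k+1) - p k)*(b*g*r)*(p (k+1) - p k) = 0 := by
          calc (p (k+1) - p k)*(b*g*r)*(p (k+1) - p k)
              = (p (k+1) - p k)*b*g*(r*(p (k+1) - p k)) := by noncomm_ring
          _ = (p (k+1) - p k)*b*g*0 := congrArg ((p (k+1) - p k)*b*g* ·) (hrek k h)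
          _ = 0 := mul_zero _
        rw [hy₁def, mul_add, add_mul, t2, add_zero, hekq' k h]
        exact e_idem hid hlo hro (by omega)
      · subst h
        rw [← hrdef, hy₁def, mul_add, hrq']
        have t3 : r*(b*g*r) = 0 := by
          calc r*(b*g*r) = (r*b)*g*r := by noncomm_ring
          _ = 0*g*r := congrArg (fun z => z*g*r) hrb
          _ = 0 := by rw [zero_mul, zero_mul]
        rw [t3, add_zero, hrr]
    have hy₂red : Ed (n+1) p (y₂+r) := by
      intro k hk
      rcases Nat.lt_succ_iff_lt_or_eq.mp hk with h | h
      · rw [mul_add, hekr k h, add_zero]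
        exact hy₂ed k h
      · subst h
        rw [← hrdef, mul_add, hry₂, hrr, zero_add, hrr]
    have hyed : Ed (n+1) p ((y₂+r)*y₁) := ed_mul_up' hid hlo hro hy₂rup hy₁up hy₂red hy₁ed
    have hyc : p (n+1)*((y₂+r)*y₁)*p (n+1) = (y₂+r)*y₁ := by
      have c2 : p (n+1)*(y₂+r) = y₂+r := by rw [mul_add, hq'y₂, hq'r]
      calc p (n+1)*((y₂+r)*y₁)*p (n+1) = (p (n+1)*(y₂+r))*(y₁*p (n+1)) := by noncomm_ring
      _ = (y₂+r)*(y₁*p (n+1)) := congrArg (· * (y₁*p (n+1))) c2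
      _ = (y₂+r)*y₁ := congrArg ((y₂+r) * ·) hy₁q'
    -- d clauses
    have hdc : p (n+1)*(d₂+S)*p (n+1) = d₂+S := by
      have c1 : p (n+1)*(d₂+S) = d₂+S := by rw [mul_add, hq'd₂, hq'S]
      have c2 : (d₂+S)*p (n+1) = d₂+S := by rw [add_mul, hd₂q', hSq']
      calc p (n+1)*(d₂+S)*p (n+1) = (p (n+1)*(d₂+S))*p (n+1) := by noncomm_ring
      _ = (d₂+S)*p (n+1) := congrArg (· * p (n+1)) c1
      _ = d₂+S := c2
    have hd'c : p (n+1)*(d₂'+S')*p (n+1) = d₂'+S' := by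
      have c1 : p (n+1)*(d₂'+S') = d₂'+S' := by rw [mul_add, hq'd₂', hq'S']
      have c2 : (d₂'+S')*p (n+1) = d₂'+S' := by rw [add_mul, hd₂'q', hS'q']
      calc p (n+1)*(d₂'+S')*p (n+1) = (p (n+1)*(d₂'+S'))*p (n+1) := by noncomm_ring
      _ = (d₂'+S')*p (n+1) := congrArg (· * p (n+1)) c1
      _ = d₂'+S' := c2
    have hdd'_new : (d₂+S)*(d₂'+S') = p (n+1) := by
      have t1 : d₂*S' = 0 := by
        calc d₂*S' = d₂*(r*S') := congrArg (d₂ * ·) hrS'.symm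
        _ = (d₂*r)*S' := by noncomm_ring
        _ = 0*S' := congrArg (· * S') hd₂r
        _ = 0 := zero_mul _
      have t2 : S*d₂' = 0 := by
        calc S*d₂' = S*(p n*d₂') := congrArg (S * ·) hqd₂'.symm
        _ = (S*p n)*d₂' := by noncomm_ring
        _ = 0*d₂' := congrArg (· * d₂') hSq
        _ = 0 := zero_mul _
      calc (d₂+S)*(d₂'+S') = d₂*d₂' + d₂*S' + S*d₂' + S*S' := by noncomm_ring
      _ = p n + 0 + 0 + r := by rw [hdd', t1, t2, hSS']
      _ = p (n+1) := by rw [hrdef]; abel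
    have hd'd_new : (d₂'+S')*(d₂+S) = p (n+1) := by
      have t1 : d₂'*S = 0 := by
        calc d₂'*S = d₂'*(r*S) := congrArg (d₂' * ·) hrS.symm
        _ = (d₂'*r)*S := by noncomm_ring
        _ = 0*S := congrArg (· * S) hd₂'r
        _ = 0 := zero_mul _
      have t2 : S'*d₂ = 0 := by
        calc S'*d₂ = S'*(p n*d₂) := congrArg (S' * ·) hqd₂.symm
        _ = (S'*p n)*d₂ := by noncomm_ring
        _ = 0*d₂ := congrArg (· * d₂) hS'q
        _ = 0 := zero_mul _
      calc (d₂'+S')*(d₂+S) = d₂'*d₂ + d₂'*S + S'*d₂ + S'*S := by noncomm_ring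
      _ = p n + 0 + 0 + r := by rw [hd'd, t1, t2, hS'S]
      _ = p (n+1) := by rw [hrdef]; abel
    have hdcomm : ∀ k ≤ n+1, p k*(d₂+S) = (d₂+S)*p k := by
      intro k hk
      rcases eq_or_lt_of_le hk with h | h
      · rw [h, mul_add, hq'd₂, hq'S, add_mul, hd₂q', hSq']
      · have hkn : k ≤ n := by omega
        rw [mul_add, add_mul, hd₂comm k hkn, hpkS k hkn, hSpk k hkn]
    have hd'comm : ∀ k ≤ n+1, p k*(d₂'+S') = (d₂'+S')*p k := by
      intro k hk
      rcases eq_or_lt_of_le hk with h | h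
      · rw [h, mul_add, hq'd₂', hq'S', add_mul, hd₂'q', hS'q']
      · have hkn : k ≤ n := by omega
        rw [mul_add, add_mul, hd₂'comm k hkn, hpkS' k hkn, hS'pk k hkn]
    -- final assembly
    have hA : (x₂+r)*(d₂+S) = x₂*d₂ + S := by
      have t1 : x₂*S = 0 := by
        calc x₂*S = (x₂*p n)*S := congrArg (· * S) hx₂q.symm
        _ = x₂*(p n*S) := by noncomm_ring
        _ = x₂*0 := congrArg (x₂ * ·) hqS
        _ = 0 := mul_zero _
      calc (x₂+r)*(d₂+S) = x₂*d₂ + x₂*S + r*d₂ + r*S := by noncomm_ring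
      _ = x₂*d₂ + 0 + 0 + S := by rw [t1, hrd₂, hrS]
      _ = x₂*d₂ + S := by abel
    have hB : (x₂*d₂ + S)*(y₂+r) = p n*g*p n + S := by
      have t1 : S*y₂ = 0 := by
        calc S*y₂ = S*(p n*y₂) := congrArg (S * ·) hqy₂.symm
        _ = (S*p n)*y₂ := by noncomm_ring
        _ = 0*y₂ := congrArg (· * y₂) hSq
        _ = 0 := zero_mul _
      have t2 : x₂*d₂*r = 0 := by
        calc x₂*d₂*r = x₂*(d₂*r) := by noncomm_ring
        _ = x₂*0 := congrArg (x₂ * ·) hd₂r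
        _ = 0 := mul_zero _
      calc (x₂*d₂ + S)*(y₂+r) = x₂*d₂*y₂ + x₂*d₂*r + S*y₂ + S*r := by noncomm_ring
      _ = x₂*d₂*y₂ + 0 + 0 + S := by rw [t2, t1, hSr]
      _ = x₂*d₂*y₂ + S := by abel
      _ = p n*g*p n + S := congrArg (· + S) hadec.symm
    have hfinal : g = (x₁*(x₂+r))*(d₂+S)*((y₂+r)*y₁) := by
      calc g = x₁*(p n*g*p n + S)*y₁ := I1
      _ = x₁*((x₂*d₂ + S)*(y₂+r))*y₁ := congrArg (fun z => x₁*z*y₁) hB.symm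
      _ = x₁*(((x₂+r)*(d₂+S))*(y₂+r))*y₁ := congrArg (fun z => x₁*(z*(y₂+r))*y₁) hA.symm
      _ = (x₁*(x₂+r))*(d₂+S)*((y₂+r)*y₁) := by noncomm_ring
    exact ⟨x₁*(x₂+r), d₂+S, (y₂+r)*y₁, d₂'+S',
      ⟨hxc, hxlo, hxed⟩, ⟨hyc, hyup, hyed⟩,
      ⟨hdc, hd'c, hdd'_new, hd'd_new, hdcomm, hd'comm⟩, hfinal⟩

end exist
end GaussDecomp

open GaussDecomp in
/-- Gauß decomposition: in a unital associative ℂ-algebra with a flag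
`δ : 0 = p₀ < p₁ < ⋯ < pₙ = 1` of idempotents, an invertible `g` satisfies that
`p_j g p_j` is invertible in the corner algebra `p_j A p_j` for `j = 1, …, n` iff
`g` admits a (unique) decomposition `g = x d y` with `d` invertible, `d, d⁻¹ ∈ D(δ)`,
`x ∈ N(1 - δ)` and `y ∈ N(δ)`. -/
theorem stmt_11 (A : Type*) [Ring A] [Algebra ℂ A]
    (n : ℕ) (hn : 1 ≤ n) (p : ℕ → A)
    (h0 : p 0 = 0) (h1 : p n = 1)
    (hid : ∀ k ≤ n, p k * p k = p k)
    (hord : ∀ k < n, p (k + 1) * p k = p k ∧ p k * p (k + 1) = p k ∧ p k ≠ p (k + 1))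
    (g : A) (hg : IsUnit g) :
    (∀ j, 1 ≤ j → j ≤ n →
      ∃ w : A, p j * w * p j = w ∧ (p j * g * p j) * w = p j ∧ w * (p j * g * p j) = p j)
    ↔
    ∃! t : A × A × A,
      (IsUnit t.2.1 ∧ (∀ k ≤ n, t.2.1 * p k = p k * t.2.1) ∧
        (∃ d' : A, t.2.1 * d' = 1 ∧ d' * t.2.1 = 1 ∧ ∀ k ≤ n, d' * p k = p k * d')) ∧
      ((∀ k ≤ n, t.1 * (1 - p k) = (1 - p k) * t.1 * (1 - p k)) ∧
        (∑ k ∈ Finset.range n, (p (k + 1) - p k) * t.1 * (p (k + 1) - p k)) = 1) ∧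
      ((∀ k ≤ n, t.2.2 * p k = p k * t.2.2 * p k) ∧
        (∑ k ∈ Finset.range n, (p (k + 1) - p k) * t.2.2 * (p (k + 1) - p k)) = 1) ∧
      g = t.1 * t.2.1 * t.2.2 := by
  have hlo : ∀ k < n, p (k+1) * p k = p k := fun k hk => (hord k hk).1
  have hro : ∀ k < n, p k * p (k+1) = p k := fun k hk => (hord k hk).2.1
  constructor
  · -- corners invertible → unique Gauss decomposition
    intro hcor
    have hgq : p n * g * p n = g := by rw [h1, one_mul, mul_one]
    obtain ⟨x, d, y, d', ⟨hxc, hxlo, hxed⟩, ⟨hyc, hyup, hyed⟩,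
      ⟨hdc, hd'c, hdd', hd'd, hdcomm, hd'comm⟩, hg'⟩ :=
      gauss_exists n hn p h0 hid hlo hro g hgq hcor
    rw [h1] at hdd' hd'd
    refine ⟨(x, d, y), ⟨⟨⟨⟨d, d', hdd', hd'd⟩, rfl⟩,
      fun k hk => (hdcomm k hk).symm,
      ⟨d', hdd', hd'd, fun k hk => (hd'comm k hk).symm⟩⟩, ⟨?_, ?_⟩, ⟨hyup, ?_⟩, hg'⟩, ?_⟩
    · intro k hk
      have h := hxlo k hk
      have expand : (1 - p k)*x*(1 - p k) = x - p k*x - x*p k + p k*x*p k := by noncomm_ring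
      rw [expand, ← h]
      noncomm_ring
    · calc (∑ k ∈ Finset.range n, (p (k+1) - p k)*x*(p (k+1) - p k))
          = ∑ k ∈ Finset.range n, (p (k+1) - p k) :=
            Finset.sum_congr rfl (fun k hk => hxed k (Finset.mem_range.mp hk))
      _ = 1 := e_sum h0 h1
    · calc (∑ k ∈ Finset.range n, (p (k+1) - p k)*y*(p (k+1) - p k))
          = ∑ k ∈ Finset.range n, (p (k+1) - p k) :=
            Finset.sum_congr rfl (fun k hk => hyed k (Finset.mem_range.mp hk))
      _ = 1 := e_sum h0 h1
    · rintro ⟨x₀, d₀, y₀⟩ ⟨⟨hd₀unit, hd₀comm, ⟨d₀', hd₀1, hd₀2, hd₀'comm⟩⟩,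
        ⟨hx₀lo', hx₀phi⟩, ⟨hy₀up, hy₀phi⟩, hg₀⟩
      have hx₀lo : Lo n p x₀ := by
        intro k hk
        have h := hx₀lo' k hk
        have key : p k*x₀*p k - p k*x₀ = 0 := by
          have e1 : (1 - p k)*x₀*(1 - p k) - x₀*(1 - p k) = p k*x₀*p k - p k*x₀ := by
            noncomm_ring
          rw [← e1, ← h, sub_self]
        exact (sub_eq_zero.mp key).symm
      have hx₀ed : Ed n p x₀ := phi_to_ed hid hlo hro hx₀phi
      have hy₀ed : Ed n p y₀ := phi_to_ed hid hlo hro hy₀phi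
      have heq : x₀*d₀*y₀ = x*d*y := hg₀.symm.trans hg'
      obtain ⟨e1, e2, e3⟩ := gauss_unique hid hlo hro h0 h1 hn hx₀lo hx₀ed hy₀up hy₀ed
        (fun k hk => (hd₀comm k hk).symm) hxlo hxed hyup hyed hdcomm
        hd₀1 hd₀2 hdd' hd'd heq
      subst e1; subst e2; subst e3
      rfl
  · -- decomposition → corners invertible
    intro hEx
    obtain ⟨⟨x, d, y⟩, ⟨⟨hdunit, hdcomm, ⟨d', hd1, hd2, hd'comm⟩⟩,
      ⟨hxlo', hxphi⟩, ⟨hyup, hyphi⟩, hgdef⟩, -⟩ := hEx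
    have hxLo : Lo n p x := by
      intro k hk
      have h := hxlo' k hk
      have key : p k*x*p k - p k*x = 0 := by
        have e1 : (1 - p k)*x*(1 - p k) - x*(1 - p k) = p k*x*p k - p k*x := by
          noncomm_ring
        rw [← e1, ← h, sub_self]
      exact (sub_eq_zero.mp key).symm
    have hxEd : Ed n p x := phi_to_ed hid hlo hro hxphi
    have hyEd : Ed n p y := phi_to_ed hid hlo hro hyphi
    obtain ⟨xi, hxxi, hxix, hxiLo, hxiEd⟩ := nlo_inv hid hlo hro h0 h1 hn hxLo hxEd
    obtain ⟨yi, hyyi, hyiy, hyiUp, hyiEd⟩ := nup_inv hid hlo hro h0 h1 hn hyup hyEd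
    intro j hj1 hjn
    have hpj := hid j hjn
    obtain ⟨w, hw1, hw2, hw3⟩ := corner_triple hpj (hxLo j hjn) (hxiLo j hjn)
      (hyup j hjn) (hyiUp j hjn) (hdcomm j hjn).symm (hd'comm j hjn).symm
      hxxi hxix hyyi hyiy hd1 hd2
    refine ⟨w, hw1, ?_, ?_⟩
    · rw [hgdef]; exact hw2
    · rw [hgdef]; exact hw3
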